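/- arXiv:1803.11153 — 4 statements merged into one kernel-verified Lean document; each statement's English description precedes it below -/
import Mathlib

section
/- Let H be the Heisenberg group with center Z(H) = exp(ℝZ), and let γ ≠ 0. For any Schwartz function f on H, (2π/|γ|) ∫_ℝ ∫_H f(exp(tZ)·h) conj(f(h)) e^{itγ} dh dt = (2π/|γ|) ∫_{ℝ²} |∫_ℝ f(exp(xX+yY+zZ)) e^{izγ} dz|² dy dx ≥ 0. In particular the Kirillov character of the orbit Z* = γ is positive on convolutions f * f*. -/
open MeasureTheory

open Complex

private lemma aux_ineq (t z : ℝ) :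
    (1+(z+t)^2)⁻¹ * (1+z^2)⁻¹ ≤ 4*(1+t^2)⁻¹ * ((1+z^2)⁻¹ + (1+(z+t)^2)⁻¹) := by
  have hA : (0:ℝ) < 1+(z+t)^2 := by positivity
  have hB : (0:ℝ) < 1+z^2 := by positivity
  have hC : (0:ℝ) < 1+t^2 := by positivity
  have key : (1+t^2) * ((1+(z+t)^2) * (1+z^2))⁻¹ ≤ 4 * ((1+z^2)⁻¹ + (1+(z+t)^2)⁻¹) := by
    rw [mul_inv]
    have h4 : 1+t^2 ≤ 4*((1+(z+t)^2) + (1+z^2)) := by nlinarith [sq_nonneg (2*z+t)]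
    calc (1+t^2) * ((1+(z+t)^2)⁻¹ * (1+z^2)⁻¹)
        ≤ (4*((1+(z+t)^2) + (1+z^2))) * ((1+(z+t)^2)⁻¹ * (1+z^2)⁻¹) := by
          apply mul_le_mul_of_nonneg_right h4 (by positivity)
      _ = 4 * ((1+z^2)⁻¹ + (1+(z+t)^2)⁻¹) := by field_simp
  calc (1+(z+t)^2)⁻¹ * (1+z^2)⁻¹ = (1+t^2)⁻¹ * ((1+t^2) * ((1+(z+t)^2) * (1+z^2))⁻¹) := by
        rw [mul_inv]; field_simp
    _ ≤ (1+t^2)⁻¹ * (4 * ((1+z^2)⁻¹ + (1+(z+t)^2)⁻¹)) := by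
        apply mul_le_mul_of_nonneg_left key (by positivity)
    _ = 4*(1+t^2)⁻¹ * ((1+z^2)⁻¹ + (1+(z+t)^2)⁻¹) := by ring

private lemma schwartz_decay3 (f : SchwartzMap (ℝ × ℝ × ℝ) ℂ) :
    ∃ K : ℝ, 0 ≤ K ∧ ∀ w : ℝ × ℝ × ℝ,
      ‖f w‖ ≤ K * (1+w.1^2)⁻¹ * ((1+w.2.1^2)⁻¹ * (1+w.2.2^2)⁻¹) := by
  refine ⟨2 ^ 6 * (Finset.Iic ((6:ℕ),(0:ℕ))).sup (fun m => SchwartzMap.seminorm ℝ m.1 m.2) f,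
    by positivity, fun w => ?_⟩
  have h := SchwartzMap.one_add_le_sup_seminorm_apply (𝕜 := ℝ) (m := ((6:ℕ),(0:ℕ)))
    le_rfl le_rfl f w
  rw [norm_iteratedFDeriv_zero] at h
  set C : ℝ := 2 ^ 6 * (Finset.Iic ((6:ℕ),(0:ℕ))).sup (fun m => SchwartzMap.seminorm ℝ m.1 m.2) f with hC
  have hC0 : 0 ≤ C := by positivity
  have hx : |w.1| ≤ ‖w‖ := by
    simpa [Real.norm_eq_abs] using norm_fst_le w
  have hy : |w.2.1| ≤ ‖w‖ := by
    simpa [Real.norm_eq_abs] using (norm_fst_le w.2).trans (norm_snd_le w)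
  have hz : |w.2.2| ≤ ‖w‖ := by
    simpa [Real.norm_eq_abs] using (norm_snd_le w.2).trans (norm_snd_le w)
  have hN : (0:ℝ) ≤ ‖w‖ := norm_nonneg w
  have e1 : 1 + w.1^2 ≤ (1+‖w‖)^2 := by nlinarith [_root_.sq_abs w.1, abs_nonneg w.1]
  have e2 : 1 + w.2.1^2 ≤ (1+‖w‖)^2 := by nlinarith [_root_.sq_abs w.2.1, abs_nonneg w.2.1]
  have e3 : 1 + w.2.2^2 ≤ (1+‖w‖)^2 := by nlinarith [_root_.sq_abs w.2.2, abs_nonneg w.2.2]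
  have eprod : (1+w.1^2) * ((1+w.2.1^2) * (1+w.2.2^2)) ≤ (1+‖w‖)^6 := by
    calc (1+w.1^2) * ((1+w.2.1^2) * (1+w.2.2^2))
        ≤ (1+‖w‖)^2 * ((1+‖w‖)^2 * (1+‖w‖)^2) := by
          apply mul_le_mul e1 ?_ (by positivity) (by positivity)
          apply mul_le_mul e2 e3 (by positivity) (by positivity)
      _ = (1+‖w‖)^6 := by ring
  have hP : (0:ℝ) < (1+w.1^2) * ((1+w.2.1^2) * (1+w.2.2^2)) := by positivity
  have : ‖f w‖ ≤ C / ((1+w.1^2) * ((1+w.2.1^2) * (1+w.2.2^2))) := by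
    rw [le_div_iff₀ hP]
    calc ‖f w‖ * ((1+w.1^2) * ((1+w.2.1^2) * (1+w.2.2^2)))
        ≤ ‖f w‖ * (1+‖w‖)^6 := by
          apply mul_le_mul_of_nonneg_left eprod (norm_nonneg _)
      _ = (1+‖w‖)^6 * ‖f w‖ := by ring
      _ ≤ C := h
  calc ‖f w‖ ≤ C / ((1+w.1^2) * ((1+w.2.1^2) * (1+w.2.2^2))) := this
    _ = C * (1+w.1^2)⁻¹ * ((1+w.2.1^2)⁻¹ * (1+w.2.2^2)⁻¹) := by
      rw [div_eq_mul_inv, mul_inv, mul_inv]; ring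

private lemma e_norm (γ s : ℝ) : ‖Complex.exp (Complex.I * s * γ)‖ = 1 := by
  simp [Complex.norm_exp]

private lemma e_conj (γ s : ℝ) :
    (starRingEnd ℂ) (Complex.exp (Complex.I * s * γ)) = Complex.exp (-(Complex.I * s * γ)) := by
  rw [← Complex.exp_conj]
  congr 1
  rw [map_mul, map_mul, Complex.conj_I, Complex.conj_ofReal, Complex.conj_ofReal]
  ring

private lemma e_mul (γ z t : ℝ) :
    Complex.exp (-(Complex.I * z * γ)) * Complex.exp (Complex.I * (↑(z+t)) * γ)
      = Complex.exp (Complex.I * t * γ) := by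
  rw [← Complex.exp_add]
  congr 1
  push_cast
  ring

private lemma int_inv3 :
    Integrable (fun v : ℝ×ℝ×ℝ => (1+v.1^2)⁻¹ * ((1+v.2.1^2)⁻¹ * (1+v.2.2^2)⁻¹)) := by
  have h2 : Integrable (fun w : ℝ×ℝ => (1+w.1^2)⁻¹ * (1+w.2^2)⁻¹) := by
    rw [Measure.volume_eq_prod]
    exact integrable_inv_one_add_sq.mul_prod integrable_inv_one_add_sq
  rw [Measure.volume_eq_prod]
  exact integrable_inv_one_add_sq.mul_prod h2

/-- For the Heisenberg group in exponential coordinates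
(`exp(tZ)·exp(xX+yY+zZ) = exp(xX+yY+(z+t)Z)` since `Z` is central) and `γ ≠ 0`, for any
Schwartz function `f`:
`(2π/|γ|) ∫_ℝ ∫_H f(exp(tZ)h) conj(f h) e^{itγ} dh dt
  = (2π/|γ|) ∫_{ℝ²} |∫_ℝ f(exp(xX+yY+zZ)) e^{izγ} dz|² dy dx ≥ 0`;
in particular the Kirillov character of the orbit `Z* = γ` is positive on `f * f*`. -/
theorem statement10 (γ : ℝ) (hγ : γ ≠ 0) (f : SchwartzMap (ℝ × ℝ × ℝ) ℂ) :
    ((2 * Real.pi / |γ| : ℝ) : ℂ) *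
        ∫ t : ℝ, ∫ v : ℝ × ℝ × ℝ,
          f (v.1, v.2.1, v.2.2 + t) * (starRingEnd ℂ) (f v) * Complex.exp (Complex.I * t * γ)
      = (((2 * Real.pi / |γ| : ℝ) *
          ∫ p : ℝ × ℝ, ‖∫ z : ℝ, f (p.1, p.2, z) * Complex.exp (Complex.I * z * γ)‖ ^ 2 : ℝ) : ℂ) ∧
    0 ≤ (2 * Real.pi / |γ| : ℝ) *
          ∫ p : ℝ × ℝ, ‖∫ z : ℝ, f (p.1, p.2, z) * Complex.exp (Complex.I * z * γ)‖ ^ 2 := by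
  have hconjc := Complex.continuous_conj
  have hcont := f.continuous
  obtain ⟨K, hK0, hK⟩ := schwartz_decay3 f
  have hinv1 : ∀ a : ℝ, (1+a^2)⁻¹ ≤ 1 := by
    intro a
    rw [inv_le_one_iff₀]
    right; nlinarith
  have hinvpos : ∀ a : ℝ, (0:ℝ) < (1+a^2)⁻¹ := fun a => by positivity
  have hKz : ∀ w : ℝ×ℝ×ℝ, ‖f w‖ ≤ K * (1+w.2.2^2)⁻¹ := by
    intro w
    refine (hK w).trans ?_
    calc K * (1+w.1^2)⁻¹ * ((1+w.2.1^2)⁻¹ * (1+w.2.2^2)⁻¹)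
        ≤ K * 1 * (1 * (1+w.2.2^2)⁻¹) := by
          gcongr
          · exact hinv1 _
          · exact hinv1 _
      _ = K * (1+w.2.2^2)⁻¹ := by ring
  have hbdd : ∀ w : ℝ×ℝ×ℝ, ‖f w‖ ≤ K := by
    intro w
    refine (hKz w).trans ?_
    calc K * (1+w.2.2^2)⁻¹ ≤ K * 1 := by gcongr; exact hinv1 _
      _ = K := by ring
  constructor
  · -- main equality
    rw [Complex.ofReal_mul]
    congr 1
    -- Step 1: per t, split the ℝ³ integral
    have step1 : ∀ t : ℝ,
        (∫ v : ℝ×ℝ×ℝ,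
            f (v.1, v.2.1, v.2.2 + t) * (starRingEnd ℂ) (f v) * Complex.exp (Complex.I * t * γ))
        = ∫ p : ℝ × ℝ, ∫ z : ℝ,
            f (p.1, p.2, z + t) * (starRingEnd ℂ) (f (p.1, p.2, z)) *
              Complex.exp (Complex.I * t * γ) := by
      intro t
      have hXcont : Continuous (fun v : ℝ×ℝ×ℝ =>
          f (v.1, v.2.1, v.2.2 + t) * (starRingEnd ℂ) (f v) *
            Complex.exp (Complex.I * t * γ)) := by fun_prop
      have hXint : Integrable (fun v : ℝ×ℝ×ℝ =>
          f (v.1, v.2.1, v.2.2 + t) * (starRingEnd ℂ) (f v) *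
            Complex.exp (Complex.I * t * γ)) := by
        refine (int_inv3.const_mul (K*K)).mono' hXcont.aestronglyMeasurable
          (Filter.Eventually.of_forall fun v => ?_)
        rw [norm_mul, norm_mul, e_norm, mul_one, RCLike.norm_conj]
        calc ‖f (v.1, v.2.1, v.2.2 + t)‖ * ‖f v‖
            ≤ K * (K * (1+v.1^2)⁻¹ * ((1+v.2.1^2)⁻¹ * (1+v.2.2^2)⁻¹)) :=
              mul_le_mul (hbdd _) (hK v) (norm_nonneg _) hK0
          _ = K*K * ((1+v.1^2)⁻¹ * ((1+v.2.1^2)⁻¹ * (1+v.2.2^2)⁻¹)) := by ring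
      have hassoc := (MeasureTheory.volume_preserving_prodAssoc (α₁ := ℝ) (β₁ := ℝ) (γ₁ := ℝ))
      have hXq : Integrable (fun q : (ℝ×ℝ)×ℝ =>
          f (q.1.1, q.1.2, q.2 + t) * (starRingEnd ℂ) (f (q.1.1, q.1.2, q.2)) *
            Complex.exp (Complex.I * t * γ)) ((volume : Measure (ℝ×ℝ)).prod volume) :=
        (hassoc.integrable_comp hXcont.aestronglyMeasurable).mpr hXint
      calc (∫ v : ℝ×ℝ×ℝ,
              f (v.1, v.2.1, v.2.2 + t) * (starRingEnd ℂ) (f v) *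
                Complex.exp (Complex.I * t * γ))
          = ∫ q : (ℝ×ℝ)×ℝ,
              f (q.1.1, q.1.2, q.2 + t) * (starRingEnd ℂ) (f (q.1.1, q.1.2, q.2)) *
                Complex.exp (Complex.I * t * γ) :=
            (hassoc.integral_comp MeasurableEquiv.prodAssoc.measurableEmbedding _).symm
        _ = ∫ p : ℝ × ℝ, ∫ z : ℝ,
              f (p.1, p.2, z + t) * (starRingEnd ℂ) (f (p.1, p.2, z)) *
                Complex.exp (Complex.I * t * γ) := integral_prod _ hXq
    -- Step 2: swap integrability
    have hDint : Integrable (fun q : ℝ × (ℝ × ℝ) =>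
        (8*Real.pi*K^2) * ((1+q.1^2)⁻¹ * ((1+q.2.1^2)⁻¹ * (1+q.2.2^2)⁻¹)))
        ((volume : Measure ℝ).prod (volume : Measure (ℝ×ℝ))) := by
      have h2 : Integrable (fun w : ℝ×ℝ => (1+w.1^2)⁻¹ * (1+w.2^2)⁻¹) := by
        rw [Measure.volume_eq_prod]
        exact integrable_inv_one_add_sq.mul_prod integrable_inv_one_add_sq
      exact (integrable_inv_one_add_sq.mul_prod h2).const_mul _
    have hWcont : Continuous (fun q : (ℝ × (ℝ × ℝ)) × ℝ =>
        f (q.1.2.1, q.1.2.2, q.2 + q.1.1) * (starRingEnd ℂ) (f (q.1.2.1, q.1.2.2, q.2)) *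
          Complex.exp (Complex.I * q.1.1 * γ)) := by fun_prop
    have hswapInt : Integrable (Function.uncurry (fun (t : ℝ) (p : ℝ × ℝ) =>
        ∫ z : ℝ, f (p.1, p.2, z + t) * (starRingEnd ℂ) (f (p.1, p.2, z)) *
          Complex.exp (Complex.I * t * γ)))
        ((volume : Measure ℝ).prod (volume : Measure (ℝ×ℝ))) := by
      refine Integrable.mono' hDint
        (hWcont.aestronglyMeasurable.integral_prod_right')
        (Filter.Eventually.of_forall fun q => ?_)
      obtain ⟨t, x, y⟩ := q
      simp only [Function.uncurry_apply_pair]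
      have hgint : Integrable (fun z : ℝ => (4*K^2 * ((1+t^2)⁻¹ * ((1+x^2)⁻¹ * (1+y^2)⁻¹))) *
          ((1+z^2)⁻¹ + (1+(z+t)^2)⁻¹)) :=
        ((integrable_inv_one_add_sq.add (integrable_inv_one_add_sq.comp_add_right t)).const_mul _)
      have hptw : ∀ z : ℝ, ‖f (x, y, z + t) * (starRingEnd ℂ) (f (x, y, z)) *
          Complex.exp (Complex.I * t * γ)‖ ≤
          (4*K^2 * ((1+t^2)⁻¹ * ((1+x^2)⁻¹ * (1+y^2)⁻¹))) * ((1+z^2)⁻¹ + (1+(z+t)^2)⁻¹) := by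
        intro z
        rw [norm_mul, norm_mul, e_norm, mul_one, RCLike.norm_conj]
        calc ‖f (x, y, z + t)‖ * ‖f (x, y, z)‖
            ≤ (K * (1+x^2)⁻¹ * ((1+y^2)⁻¹ * (1+(z+t)^2)⁻¹)) * (K * (1+z^2)⁻¹) :=
              mul_le_mul (hK (x, y, z+t)) (hKz (x, y, z)) (norm_nonneg _) (by positivity)
          _ = (K^2*((1+x^2)⁻¹*(1+y^2)⁻¹)) * ((1+(z+t)^2)⁻¹ * (1+z^2)⁻¹) := by ring
          _ ≤ (K^2*((1+x^2)⁻¹*(1+y^2)⁻¹)) *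
              (4*(1+t^2)⁻¹ * ((1+z^2)⁻¹ + (1+(z+t)^2)⁻¹)) :=
            mul_le_mul_of_nonneg_left (aux_ineq t z) (by positivity)
          _ = (4*K^2 * ((1+t^2)⁻¹ * ((1+x^2)⁻¹ * (1+y^2)⁻¹))) *
              ((1+z^2)⁻¹ + (1+(z+t)^2)⁻¹) := by ring
      calc ‖∫ z : ℝ, f (x, y, z + t) * (starRingEnd ℂ) (f (x, y, z)) *
              Complex.exp (Complex.I * t * γ)‖
          ≤ ∫ z : ℝ, (4*K^2 * ((1+t^2)⁻¹ * ((1+x^2)⁻¹ * (1+y^2)⁻¹))) *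
              ((1+z^2)⁻¹ + (1+(z+t)^2)⁻¹) :=
            norm_integral_le_of_norm_le hgint (Filter.Eventually.of_forall hptw)
        _ = (4*K^2 * ((1+t^2)⁻¹ * ((1+x^2)⁻¹ * (1+y^2)⁻¹))) * (Real.pi + Real.pi) := by
            rw [integral_const_mul, integral_add integrable_inv_one_add_sq
              (integrable_inv_one_add_sq.comp_add_right t),
              integral_univ_inv_one_add_sq,
              integral_add_right_eq_self (fun u : ℝ => (1+u^2)⁻¹) t,
              integral_univ_inv_one_add_sq]
        _ = (8*Real.pi*K^2) * ((1+t^2)⁻¹ * ((1+x^2)⁻¹ * (1+y^2)⁻¹)) := by ring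
    -- Step 3: per p, compute the (t,z) double integral
    have step3 : ∀ p : ℝ × ℝ,
        (∫ t : ℝ, ∫ z : ℝ, f (p.1, p.2, z + t) * (starRingEnd ℂ) (f (p.1, p.2, z)) *
            Complex.exp (Complex.I * t * γ))
        = ((‖∫ z : ℝ, f (p.1, p.2, z) * Complex.exp (Complex.I * z * γ)‖^2 : ℝ) : ℂ) := by
      intro p
      set F2 : ℝ → ℂ := fun u => f (p.1, p.2, u) * Complex.exp (Complex.I * u * γ) with hF2
      set F1 : ℝ → ℂ := fun z => (starRingEnd ℂ) (F2 z) with hF1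
      have hF2cont : Continuous F2 := by rw [hF2]; fun_prop
      have hF1cont : Continuous F1 := by rw [hF1]; exact hconjc.comp hF2cont
      have hF2int : Integrable F2 := by
        refine (integrable_inv_one_add_sq.const_mul K).mono' hF2cont.aestronglyMeasurable
          (Filter.Eventually.of_forall fun z => ?_)
        rw [hF2]
        simp only []
        rw [norm_mul, e_norm, mul_one]
        exact hKz (p.1, p.2, z)
      have hF1int : Integrable F1 := by
        refine (integrable_inv_one_add_sq.const_mul K).mono' hF1cont.aestronglyMeasurable
          (Filter.Eventually.of_forall fun z => ?_)
        rw [hF1]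
        simp only []
        rw [RCLike.norm_conj, hF2]
        simp only []
        rw [norm_mul, e_norm, mul_one]
        exact hKz (p.1, p.2, z)
      have hH : Integrable (fun q : ℝ×ℝ => F1 q.1 * F2 q.2)
          ((volume : Measure ℝ).prod volume) := hF1int.mul_prod hF2int
      have hHmeas : AEStronglyMeasurable (fun q : ℝ×ℝ => F1 q.1 * F2 q.2)
          ((volume : Measure ℝ).prod volume) :=
        ((hF1cont.comp continuous_fst).mul (hF2cont.comp continuous_snd)).aestronglyMeasurable
      have hφ : MeasurePreserving (fun q : ℝ×ℝ => (q.1, q.1 + q.2))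
          ((volume : Measure ℝ).prod volume) ((volume : Measure ℝ).prod volume) :=
        measurePreserving_prod_add volume volume
      have hφemb : MeasurableEmbedding (fun q : ℝ×ℝ => (q.1, q.1 + q.2)) :=
        (MeasurableEquiv.shearAddRight ℝ).measurableEmbedding
      have hkey : ∀ (t z : ℝ), F1 z * F2 (z + t) =
          f (p.1, p.2, z + t) * (starRingEnd ℂ) (f (p.1, p.2, z)) *
            Complex.exp (Complex.I * t * γ) := by
        intro t z
        rw [hF1, hF2]
        simp only [map_mul]
        rw [e_conj γ z]
        calc (starRingEnd ℂ) (f (p.1, p.2, z)) * Complex.exp (-(Complex.I * z * γ)) *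
              (f (p.1, p.2, z + t) * Complex.exp (Complex.I * (↑(z+t)) * γ))
            = f (p.1, p.2, z + t) * (starRingEnd ℂ) (f (p.1, p.2, z)) *
              (Complex.exp (-(Complex.I * z * γ)) * Complex.exp (Complex.I * (↑(z+t)) * γ)) := by
              ring
          _ = f (p.1, p.2, z + t) * (starRingEnd ℂ) (f (p.1, p.2, z)) *
              Complex.exp (Complex.I * t * γ) := by rw [e_mul γ z t]
      have hcomp1 : Integrable ((fun q : ℝ×ℝ => F1 q.1 * F2 q.2) ∘
          (fun q : ℝ×ℝ => (q.1, q.1 + q.2))) ((volume : Measure ℝ).prod volume) :=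
        (hφ.integrable_comp hHmeas).mpr hH
      have hcomp2 : Integrable (((fun q : ℝ×ℝ => F1 q.1 * F2 q.2) ∘
          (fun q : ℝ×ℝ => (q.1, q.1 + q.2))) ∘ Prod.swap)
          ((volume : Measure ℝ).prod volume) :=
        (Measure.measurePreserving_swap.integrable_comp
          hcomp1.aestronglyMeasurable).mpr hcomp1
      have hunc : Integrable (Function.uncurry (fun (t z : ℝ) =>
          f (p.1, p.2, z + t) * (starRingEnd ℂ) (f (p.1, p.2, z)) *
            Complex.exp (Complex.I * t * γ))) ((volume : Measure ℝ).prod volume) := by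
        have he : Function.uncurry (fun (t z : ℝ) =>
            f (p.1, p.2, z + t) * (starRingEnd ℂ) (f (p.1, p.2, z)) *
              Complex.exp (Complex.I * t * γ)) =
            ((fun q : ℝ×ℝ => F1 q.1 * F2 q.2) ∘
              (fun q : ℝ×ℝ => (q.1, q.1 + q.2))) ∘ Prod.swap := by
          funext q
          exact (hkey q.1 q.2).symm
        rw [he]
        exact hcomp2
      calc (∫ t : ℝ, ∫ z : ℝ, f (p.1, p.2, z + t) * (starRingEnd ℂ) (f (p.1, p.2, z)) *
              Complex.exp (Complex.I * t * γ))
          = ∫ q : ℝ×ℝ, f (p.1, p.2, q.2 + q.1) * (starRingEnd ℂ) (f (p.1, p.2, q.2)) *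
              Complex.exp (Complex.I * q.1 * γ) ∂((volume : Measure ℝ).prod volume) :=
            integral_integral hunc
        _ = ∫ q : ℝ×ℝ, F1 q.2 * F2 (q.2 + q.1)
              ∂((volume : Measure ℝ).prod volume) := by
            refine integral_congr_ae (Filter.Eventually.of_forall fun q => ?_)
            exact (hkey q.1 q.2).symm
        _ = ∫ q : ℝ×ℝ, F1 q.1 * F2 (q.1 + q.2)
              ∂((volume : Measure ℝ).prod volume) :=
            Measure.measurePreserving_swap.integral_comp
              (MeasurableEquiv.prodComm (α := ℝ) (β := ℝ)).measurableEmbedding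
              (fun q : ℝ×ℝ => F1 q.1 * F2 (q.1 + q.2))
        _ = ∫ q : ℝ×ℝ, F1 q.1 * F2 q.2 ∂((volume : Measure ℝ).prod volume) :=
            hφ.integral_comp hφemb (fun q : ℝ×ℝ => F1 q.1 * F2 q.2)
        _ = (∫ z : ℝ, F1 z) * (∫ u : ℝ, F2 u) := integral_prod_mul F1 F2
        _ = (starRingEnd ℂ) (∫ u : ℝ, F2 u) * (∫ u : ℝ, F2 u) := by rw [hF1, integral_conj]
        _ = ((‖∫ u : ℝ, F2 u‖^2 : ℝ) : ℂ) := by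
            rw [mul_comm, Complex.mul_conj, Complex.normSq_eq_norm_sq]
    -- assemble
    have e1 : (fun t : ℝ => ∫ v : ℝ×ℝ×ℝ,
        f (v.1, v.2.1, v.2.2 + t) * (starRingEnd ℂ) (f v) * Complex.exp (Complex.I * t * γ)) =
        (fun t : ℝ => ∫ p : ℝ × ℝ, ∫ z : ℝ,
          f (p.1, p.2, z + t) * (starRingEnd ℂ) (f (p.1, p.2, z)) *
            Complex.exp (Complex.I * t * γ)) := funext step1
    rw [e1]
    rw [integral_integral_swap hswapInt]
    have e3 : (fun p : ℝ × ℝ => ∫ t : ℝ, ∫ z : ℝ,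
        f (p.1, p.2, z + t) * (starRingEnd ℂ) (f (p.1, p.2, z)) *
          Complex.exp (Complex.I * t * γ)) =
        (fun p : ℝ × ℝ =>
          ((‖∫ z : ℝ, f (p.1, p.2, z) * Complex.exp (Complex.I * z * γ)‖^2 : ℝ) : ℂ)) :=
      funext step3
    rw [e3]
    exact integral_ofReal
  · -- positivity
    apply mul_nonneg (by positivity)
    exact integral_nonneg fun p => by positivity
end

section
/- Let G be a connected nilpotent Lie group, ℓ ∈ 𝔤*, 𝔪 a polarizing subalgebra subordinate to ℓ, and M = exp 𝔪. Suppose the Kirillov character of the orbit O through ℓ admits the representation χ_O(f) = ∫_{G/M} ∫_M f(xpx⁻¹) e^{iℓ(log p)} dp dxM for Schwartz f. Then for every Schwartz function f on G, χ_O(f * f*) = ∫_{G/M} ∫_{G/M} |∫_M f(xp⁻¹y⁻¹) e^{−iℓ(log p)} dp|² dyM dxM ≥ 0. -/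
open MeasureTheory Complex Pointwise

section Aux

variable {G : Type*} [Group G] [TopologicalSpace G] [IsTopologicalGroup G]

private lemma aux_closure_compact [LocallyCompactSpace G] {C : Set G} (hC : IsCompact C) :
    IsCompact (closure C) := by
  obtain ⟨V, hVc, hVn⟩ := exists_compact_mem_nhds (1 : G)
  have hsub : closure C ⊆ C * V⁻¹ := by
    intro y hy
    have hyO : y ∈ {z | y⁻¹ * z ∈ interior V} := by
      simp [mem_interior_iff_mem_nhds.2 hVn]
    have hO : IsOpen {z | y⁻¹ * z ∈ interior V} :=
      isOpen_interior.preimage (continuous_const.mul continuous_id)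
    obtain ⟨c, hcO, hcC⟩ := mem_closure_iff.1 hy _ hO hyO
    refine ⟨c, hcC, (y⁻¹ * c)⁻¹, ?_, by group⟩
    simp only [Set.mem_inv, inv_inv]
    exact interior_subset hcO
  exact (hC.mul hVc.inv).of_isClosed_subset isClosed_closure hsub

private lemma aux_unif_right [LocallyCompactSpace G] (f : G → ℂ) (hf : Continuous f)
    (hfc : HasCompactSupport f) {ε : ℝ} (hε : 0 < ε) :
    ∃ V : Set G, IsOpen V ∧ (1 : G) ∈ V ∧ ∀ v ∈ V, ∀ z, ‖f (z * v) - f z‖ ≤ ε := by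
  obtain ⟨C, hCc, hCn⟩ := exists_compact_mem_nhds (1 : G)
  have h1C : (1 : G) ∈ C := mem_of_mem_nhds hCn
  have hKc : IsCompact (tsupport f) := hfc
  set K₂ := tsupport f * C⁻¹ with hK₂
  have hK₂c : IsCompact K₂ := hKc.mul hCc.inv
  have hKK₂ : tsupport f ⊆ K₂ := fun k hk => ⟨k, hk, 1, by simpa using h1C, mul_one k⟩
  -- choose good neighborhoods at every point
  have hch : ∀ z : G, ∃ W : Set G, IsOpen W ∧ (1 : G) ∈ W ∧
      ∀ a ∈ W * W, ‖f (z * a) - f z‖ ≤ ε / 2 := by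
    intro z
    have hmem : {a : G | ‖f (z * a) - f z‖ < ε / 2} ∈ nhds (1 : G) := by
      have hcont : Filter.Tendsto (fun a => f (z * a)) (nhds 1) (nhds (f z)) := by
        have := (hf.comp (continuous_const.mul continuous_id : Continuous fun a : G => z * a)).continuousAt (x := (1 : G))
        simpa [ContinuousAt, Function.comp_def, Pi.mul_apply] using this
      have := Metric.tendsto_nhds.1 hcont (ε / 2) (by linarith)
      simp only [dist_eq_norm] at this
      exact this
    obtain ⟨W, hWopen, hW1, hWsub⟩ := exists_open_nhds_one_mul_subset hmem
    exact ⟨W, hWopen, hW1, fun a ha => le_of_lt (hWsub ha)⟩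
  choose W hWopen hW1 hWest using hch
  -- cover K₂
  have hcov : K₂ ⊆ ⋃ z : G, {a | z⁻¹ * a ∈ W z} := by
    intro k _
    exact Set.mem_iUnion.2 ⟨k, by simpa using hW1 k⟩
  obtain ⟨t, ht⟩ := hK₂c.elim_finite_subcover (fun z : G => {a | z⁻¹ * a ∈ W z})
    (fun z => (hWopen z).preimage (continuous_const.mul continuous_id)) hcov
  refine ⟨(⋂ z ∈ t, W z) ∩ interior C, ?_, ?_, ?_⟩
  · exact (isOpen_biInter_finset (fun z _ => hWopen z)).inter isOpen_interior
  · exact ⟨Set.mem_biInter fun z _ => hW1 z, mem_interior_iff_mem_nhds.2 hCn⟩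
  · rintro v ⟨hvW, hvC⟩ z
    by_cases hz : z ∈ K₂
    · obtain ⟨i, hit, hiz⟩ := Set.mem_iUnion₂.1 (ht hz)
      have hz1 : i⁻¹ * z ∈ W i := hiz
      have hv : v ∈ W i := Set.mem_iInter₂.1 hvW i hit
      have h1 : ‖f (i * ((i⁻¹ * z) * v)) - f i‖ ≤ ε / 2 :=
        hWest i _ (Set.mul_mem_mul hz1 hv)
      have h2 : ‖f (i * ((i⁻¹ * z) * 1)) - f i‖ ≤ ε / 2 :=
        hWest i _ (Set.mul_mem_mul hz1 (hW1 i))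
      have e1 : i * ((i⁻¹ * z) * v) = z * v := by group
      have e2 : i * ((i⁻¹ * z) * 1) = z := by group
      rw [e1] at h1; rw [e2] at h2
      calc ‖f (z * v) - f z‖ = ‖(f (z * v) - f i) - (f z - f i)‖ := by ring_nf
        _ ≤ ‖f (z * v) - f i‖ + ‖f z - f i‖ := norm_sub_le _ _
        _ ≤ ε / 2 + ε / 2 := add_le_add h1 h2
        _ = ε := by ring
    · have hfz : f z = 0 := by
        by_contra h
        exact hz (hKK₂ (subset_tsupport f (by simpa using h)))
      have hfzv : f (z * v) = 0 := by
        by_contra h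
        apply hz
        have hzv : z * v ∈ tsupport f := subset_tsupport f (by simpa using h)
        exact ⟨z * v, hzv, v⁻¹, by simpa using interior_subset hvC, by group⟩
      simp [hfz, hfzv, le_of_lt hε]

private lemma aux_unif_left [LocallyCompactSpace G] (f : G → ℂ) (hf : Continuous f)
    (hfc : HasCompactSupport f) {ε : ℝ} (hε : 0 < ε) :
    ∃ V : Set G, IsOpen V ∧ (1 : G) ∈ V ∧ ∀ v ∈ V, ∀ z, ‖f (v * z) - f z‖ ≤ ε := by
  obtain ⟨V, hVopen, hV1, hVest⟩ := aux_unif_right (fun y => f y⁻¹)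
    (hf.comp continuous_inv) (hfc.comp_homeomorph (Homeomorph.inv G)) hε
  refine ⟨V⁻¹, hVopen.inv, by simpa using hV1, ?_⟩
  intro v hv z
  have := hVest v⁻¹ (by simpa using hv) z⁻¹
  simpa [mul_inv_rev] using this

end Aux



section Aux2

private lemma aux_vanish {α : Type*} [TopologicalSpace α] [MeasurableSpace α]
    [OpensMeasurableSpace α] (μ : Measure α) (φ : α → ℂ)
    (hφ : ∀ U : Set α, IsOpen U → U.Nonempty → ¬ AEStronglyMeasurable φ (μ.restrict U))
    (g : α → ℂ) (hg : Continuous g) : ∫ p, g p * φ p ∂μ = 0 := by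
  by_cases hm : AEStronglyMeasurable (fun p => g p * φ p) μ
  · rcases Set.eq_empty_or_nonempty {p | g p ≠ 0} with he | hne
    · have hz : ∀ p, g p * φ p = 0 := fun p => by
        have : g p = 0 := by
          by_contra h
          exact Set.eq_empty_iff_forall_notMem.1 he p h
        simp [this]
      simp only [hz, integral_zero]
    · exfalso
      have hUopen : IsOpen {p | g p ≠ 0} := by
        have : {p | g p ≠ 0} = g ⁻¹' ({0}ᶜ) := rfl
        rw [this]
        exact isOpen_compl_singleton.preimage hg
      have hUmeas : MeasurableSet {p | g p ≠ 0} := hUopen.measurableSet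
      apply hφ _ hUopen hne
      have h1 : AEStronglyMeasurable (fun p => g p * φ p) (μ.restrict {p | g p ≠ 0}) :=
        hm.restrict
      have h2 : AEStronglyMeasurable (fun p => (g p)⁻¹) (μ.restrict {p | g p ≠ 0}) := by
        refine ContinuousOn.aestronglyMeasurable ?_ hUmeas
        exact ContinuousOn.inv₀ hg.continuousOn fun p hp => hp
      refine (h2.mul h1).congr ?_
      refine (ae_restrict_iff' hUmeas).2 (Filter.Eventually.of_forall fun p hp => ?_)
      have hgp : g p ≠ 0 := hp
      simp only [Pi.mul_apply]
      field_simp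
  · exact integral_non_aestronglyMeasurable hm

private lemma aux_cover {H : Type*} [Group H] [TopologicalSpace H] [IsTopologicalGroup H]
    [MeasurableSpace H] [BorelSpace H] (μ : Measure H) [μ.IsMulLeftInvariant]
    (φ : H → ℂ) (hhom : ∀ a p : H, φ (a * p) = φ a * φ p)
    {U : Set H} (hUopen : IsOpen U) (hUne : U.Nonempty)
    (hU : AEStronglyMeasurable φ (μ.restrict U))
    {S : Set H} (hS : IsCompact S) : AEStronglyMeasurable φ (μ.restrict S) := by
  classical
  obtain ⟨u₀, hu₀⟩ := hUne
  have htrans : ∀ g : H, AEStronglyMeasurable φ (μ.restrict ((fun a => g⁻¹ * a) ⁻¹' U)) := by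
    intro g
    have hVmeas : MeasurableSet ((fun a : H => g⁻¹ * a) ⁻¹' U) :=
      (hUopen.preimage (continuous_const.mul continuous_id)).measurableSet
    have hpre : ((fun a : H => g * a) ⁻¹' ((fun a => g⁻¹ * a) ⁻¹' U)) = U := by
      ext a; simp [Set.mem_preimage, ← mul_assoc]
    have hmeq : μ.restrict ((fun a => g⁻¹ * a) ⁻¹' U)
        = Measure.map (fun a => g * a) (μ.restrict U) := by
      conv_lhs => rw [← map_mul_left_eq_self μ g]
      rw [Measure.restrict_map (measurable_const_mul g) hVmeas, hpre]
    rw [hmeq]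
    have hemb : MeasurableEmbedding (fun a : H => g * a) :=
      (MeasurableEquiv.smul g (α := H)).measurableEmbedding
    rw [hemb.aestronglyMeasurable_map_iff]
    exact (hU.const_mul (φ g)).congr
      (Filter.Eventually.of_forall fun a => (hhom g a).symm)
  have hcov : S ⊆ ⋃ z : H, {a | (z * u₀⁻¹)⁻¹ * a ∈ U} := by
    intro k _
    refine Set.mem_iUnion.2 ⟨k, ?_⟩
    have : (k * u₀⁻¹)⁻¹ * k = u₀ := by group
    simp only [Set.mem_setOf_eq, this]
    exact hu₀
  obtain ⟨t, ht⟩ := hS.elim_finite_subcover (fun z : H => {a | (z * u₀⁻¹)⁻¹ * a ∈ U})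
    (fun z => hUopen.preimage (continuous_const.mul continuous_id)) hcov
  have main : ∀ s : Finset H,
      AEStronglyMeasurable φ (μ.restrict (⋃ z ∈ s, {a | (z * u₀⁻¹)⁻¹ * a ∈ U})) := by
    intro s
    induction s using Finset.induction_on with
    | empty =>
      have he : (⋃ z ∈ (∅ : Finset H), {a | (z * u₀⁻¹)⁻¹ * a ∈ U}) = ∅ := by simp
      rw [he, Measure.restrict_empty]
      exact aestronglyMeasurable_zero_measure (f := φ)
    | insert _ _ hnotmem ih =>
      rw [Finset.set_biUnion_insert]
      refine AEStronglyMeasurable.mono_measure ?_ (Measure.restrict_union_le _ _)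
      rw [aestronglyMeasurable_add_measure_iff]
      exact ⟨htrans _, ih⟩
  exact (main t).mono_measure (Measure.restrict_mono ht le_rfl)

private lemma aux_swap {α β : Type*} [MeasurableSpace α] [MeasurableSpace β]
    (μa : Measure α) (μb : Measure β) {sa : Set α} {sb : Set β}
    (hsa : MeasurableSet sa) (hsb : MeasurableSet sb)
    (hfa : IsFiniteMeasure (μa.restrict sa)) (hfb : IsFiniteMeasure (μb.restrict sb))
    (F : α → β → ℂ) {C : ℝ} (hbd : ∀ a b, ‖F a b‖ ≤ C)
    (hva : ∀ a, a ∉ sa → ∀ b, F a b = 0)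
    (hvb : ∀ b, b ∉ sb → ∀ a, F a b = 0)
    (hm : AEStronglyMeasurable (Function.uncurry F) ((μa.restrict sa).prod (μb.restrict sb))) :
    ∫ a, ∫ b, F a b ∂μb ∂μa = ∫ b, ∫ a, F a b ∂μa ∂μb := by
  have hb : ∀ a, ∫ b, F a b ∂μb = ∫ b, F a b ∂(μb.restrict sb) := by
    intro a
    have : ∫ b, F a b ∂μb = ∫ b, sb.indicator (F a) b ∂μb := by
      refine integral_congr_ae (Filter.Eventually.of_forall fun b => ?_)
      by_cases hbmem : b ∈ sb
      · simp [hbmem]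
      · simp [hbmem, hvb b hbmem a]
    rw [this, integral_indicator hsb]
  have ha : ∀ b, ∫ a, F a b ∂μa = ∫ a, F a b ∂(μa.restrict sa) := by
    intro b
    have : (fun a => F a b) = fun a => sa.indicator (fun a' => F a' b) a := by
      funext a
      by_cases hamem : a ∈ sa
      · simp [hamem]
      · simp [hamem, hva a hamem b]
    rw [show ∫ a, F a b ∂μa = ∫ a, sa.indicator (fun a' => F a' b) a ∂μa from
      integral_congr_ae (Filter.Eventually.of_forall fun a => congrFun this a),
      integral_indicator hsa]
  have houtera : ∫ a, ∫ b, F a b ∂(μb.restrict sb) ∂μa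
      = ∫ a, ∫ b, F a b ∂(μb.restrict sb) ∂(μa.restrict sa) := by
    have : (fun a => ∫ b, F a b ∂(μb.restrict sb))
        = fun a => sa.indicator (fun a' => ∫ b, F a' b ∂(μb.restrict sb)) a := by
      funext a
      by_cases hamem : a ∈ sa
      · simp [hamem]
      · simp [hamem, hva a hamem]
    rw [show ∫ a, ∫ b, F a b ∂(μb.restrict sb) ∂μa
        = ∫ a, sa.indicator (fun a' => ∫ b, F a' b ∂(μb.restrict sb)) a ∂μa from
      integral_congr_ae (Filter.Eventually.of_forall fun a => congrFun this a),
      integral_indicator hsa]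
  have houterb : ∫ b, ∫ a, F a b ∂(μa.restrict sa) ∂μb
      = ∫ b, ∫ a, F a b ∂(μa.restrict sa) ∂(μb.restrict sb) := by
    have : (fun b => ∫ a, F a b ∂(μa.restrict sa))
        = fun b => sb.indicator (fun b' => ∫ a, F a b' ∂(μa.restrict sa)) b := by
      funext b
      by_cases hbmem : b ∈ sb
      · simp [hbmem]
      · have : ∀ a, F a b = 0 := hvb b hbmem
        simp [hbmem, this]
    rw [show ∫ b, ∫ a, F a b ∂(μa.restrict sa) ∂μb
        = ∫ b, sb.indicator (fun b' => ∫ a, F a b' ∂(μa.restrict sa)) b ∂μb from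
      integral_congr_ae (Filter.Eventually.of_forall fun b => congrFun this b),
      integral_indicator hsb]
  have hint : Integrable (Function.uncurry F) ((μa.restrict sa).prod (μb.restrict sb)) := by
    refine Integrable.mono' (integrable_const C) hm ?_
    exact Filter.Eventually.of_forall fun z => hbd z.1 z.2
  calc ∫ a, ∫ b, F a b ∂μb ∂μa
      = ∫ a, ∫ b, F a b ∂(μb.restrict sb) ∂μa := by
        refine integral_congr_ae (Filter.Eventually.of_forall fun a => ?_); exact hb a
    _ = ∫ a, ∫ b, F a b ∂(μb.restrict sb) ∂(μa.restrict sa) := houtera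
    _ = ∫ b, ∫ a, F a b ∂(μa.restrict sa) ∂(μb.restrict sb) := integral_integral_swap hint
    _ = ∫ b, ∫ a, F a b ∂(μa.restrict sa) ∂μb := houterb.symm
    _ = ∫ b, ∫ a, F a b ∂μa ∂μb := by
        refine integral_congr_ae (Filter.Eventually.of_forall fun b => ?_); exact (ha b).symm

end Aux2



section Aux3

variable {G : Type*} [Group G] [TopologicalSpace G] [IsTopologicalGroup G]
  [LocallyCompactSpace G] [MeasurableSpace G] [BorelSpace G]

private lemma aux_inv_real (μ : Measure G) [μ.IsHaarMeasure] [μ.IsMulRightInvariant]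
    (g : G → ℝ) (hg : Continuous g) (hgc : HasCompactSupport g) :
    ∫ y, g y⁻¹ ∂μ = ∫ y, g y ∂μ := by
  have hmapint : ∀ h : G → ℝ, ∫ y, h y ∂μ.inv = ∫ y, h y⁻¹ ∂μ := fun h => by
    rw [Measure.inv]; exact integral_map_equiv (MeasurableEquiv.inv G) h
  set c := μ.inv.haarScalarFactor μ with hc
  have key : ∀ h : G → ℝ, Continuous h → HasCompactSupport h →
      ∫ y, h y⁻¹ ∂μ = (c : ℝ) * ∫ y, h y ∂μ := by
    intro h hh hhc
    rw [← hmapint h,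
      Measure.integral_isMulLeftInvariant_eq_smul_of_hasCompactSupport μ.inv μ hh hhc,
      integral_smul_nnreal_measure]
    rfl
  obtain ⟨g₀, hg₀c, hg₀nonneg, hg₀1⟩ := exists_continuous_nonneg_pos (1 : G)
  have hg₀cont : Continuous g₀ := g₀.continuous
  have hpos : 0 < ∫ y, g₀ y ∂μ :=
    hg₀cont.integral_pos_of_hasCompactSupport_nonneg_nonzero hg₀c hg₀nonneg hg₀1
  have hc1 : (c : ℝ) = 1 := by
    have h1 := key g₀ hg₀cont hg₀c
    have hinvc : Continuous (fun y : G => g₀ y⁻¹) := hg₀cont.comp continuous_inv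
    have hinvcc : HasCompactSupport (fun y : G => g₀ y⁻¹) :=
      hg₀c.comp_homeomorph (Homeomorph.inv G)
    have h2 := key _ hinvc hinvcc
    simp only [inv_inv] at h2
    rw [h1] at h2
    have hcnn : (0 : ℝ) ≤ (c : ℝ) := c.coe_nonneg
    have h3 : ((c:ℝ) * c - 1) * ∫ y, g₀ y ∂μ = 0 := by linear_combination -h2
    have hsq : (c:ℝ) * c = 1 := by
      rcases mul_eq_zero.1 h3 with h | h
      · linarith
      · exact absurd h (ne_of_gt hpos)
    have h4 : ((c:ℝ) - 1) * ((c:ℝ) + 1) = 0 := by linear_combination hsq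
    rcases mul_eq_zero.1 h4 with h | h
    · linarith
    · linarith
  rw [key g hg hgc, hc1, one_mul]

private lemma aux_inv (μ : Measure G) [μ.IsHaarMeasure] [μ.IsMulRightInvariant]
    (g : G → ℂ) (hg : Continuous g) (hgc : HasCompactSupport g) :
    ∫ y, g y⁻¹ ∂μ = ∫ y, g y ∂μ := by
  have hint1 : Integrable g μ := hg.integrable_of_hasCompactSupport hgc
  have hint2 : Integrable (fun y => g y⁻¹) μ :=
    (hg.comp continuous_inv).integrable_of_hasCompactSupport
      (hgc.comp_homeomorph (Homeomorph.inv G))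
  have hre : Continuous fun y : G => (g y).re := Complex.continuous_re.comp hg
  have him : Continuous fun y : G => (g y).im := Complex.continuous_im.comp hg
  have hrec : HasCompactSupport fun y : G => (g y).re := hgc.comp_left (g := Complex.re) rfl
  have himc : HasCompactSupport fun y : G => (g y).im := hgc.comp_left (g := Complex.im) rfl
  apply Complex.ext
  · have e2 := Complex.reCLM.integral_comp_comm hint2
    have e1 := Complex.reCLM.integral_comp_comm hint1
    simp only [Complex.reCLM_apply] at e1 e2
    rw [← e2, ← e1]
    exact aux_inv_real μ _ hre hrec
  · have e2 := Complex.imCLM.integral_comp_comm hint2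
    have e1 := Complex.imCLM.integral_comp_comm hint1
    simp only [Complex.imCLM_apply] at e1 e2
    rw [← e2, ← e1]
    exact aux_inv_real μ _ him himc

private lemma aux_conv_continuous (μ : Measure G) [IsFiniteMeasureOnCompacts μ]
    (f : G → ℂ) (hf : Continuous f) (hfc : HasCompactSupport f) :
    Continuous (fun g : G => ∫ y, f (g * y) * (starRingEnd ℂ) (f y) ∂μ) := by
  have hfint : Integrable (fun y => ‖f y‖) μ :=
    hf.norm.integrable_of_hasCompactSupport hfc.norm
  have hint : ∀ g : G, Integrable (fun y => f (g * y) * (starRingEnd ℂ) (f y)) μ := by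
    intro g
    refine Continuous.integrable_of_hasCompactSupport ?_ ?_
    · exact (hf.comp (continuous_const.mul continuous_id)).mul (RCLike.continuous_conj.comp hf)
    · exact HasCompactSupport.mul_left (hfc.comp_left (g := starRingEnd ℂ) (map_zero _))
  rw [continuous_iff_continuousAt]
  intro g₀
  rw [ContinuousAt, Metric.tendsto_nhds]
  intro ε hε
  set cI := ∫ y, ‖f y‖ ∂μ with hcI
  have hcInn : 0 ≤ cI := integral_nonneg fun y => norm_nonneg _
  have hε' : 0 < ε / (cI + 1) := by positivity
  obtain ⟨V, hVopen, hV1, hVest⟩ := aux_unif_left f hf hfc hε'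
  have hmem : {g : G | g * g₀⁻¹ ∈ V} ∈ nhds g₀ := by
    have : IsOpen {g : G | g * g₀⁻¹ ∈ V} := hVopen.preimage (continuous_id.mul continuous_const)
    refine this.mem_nhds ?_
    simp [hV1]
  refine Filter.eventually_of_mem hmem fun g hg => ?_
  rw [dist_eq_norm]
  have hdiff : (∫ y, f (g * y) * (starRingEnd ℂ) (f y) ∂μ)
      - ∫ y, f (g₀ * y) * (starRingEnd ℂ) (f y) ∂μ
      = ∫ y, (f (g * y) - f (g₀ * y)) * (starRingEnd ℂ) (f y) ∂μ := by
    rw [← integral_sub (hint g) (hint g₀)]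
    refine integral_congr_ae (Filter.Eventually.of_forall fun y => ?_)
    ring
  rw [hdiff]
  calc ‖∫ y, (f (g * y) - f (g₀ * y)) * (starRingEnd ℂ) (f y) ∂μ‖
      ≤ ∫ y, ‖(f (g * y) - f (g₀ * y)) * (starRingEnd ℂ) (f y)‖ ∂μ :=
        norm_integral_le_integral_norm _
    _ ≤ ∫ y, (ε / (cI + 1)) * ‖f y‖ ∂μ := by
        have hsint : Integrable (fun y => (f (g * y) - f (g₀ * y)) * (starRingEnd ℂ) (f y)) μ := by
          refine ((hint g).sub (hint g₀)).congr (Filter.Eventually.of_forall fun y => ?_)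
          simp only [Pi.sub_apply]
          ring
        refine integral_mono hsint.norm (hfint.const_mul _) fun y => ?_
        · show ‖(f (g * y) - f (g₀ * y)) * (starRingEnd ℂ) (f y)‖ ≤ (ε / (cI + 1)) * ‖f y‖
          rw [norm_mul, RCLike.norm_conj]
          refine mul_le_mul_of_nonneg_right ?_ (norm_nonneg _)
          have := hVest (g * g₀⁻¹) hg (g₀ * y)
          have e : g * g₀⁻¹ * (g₀ * y) = g * y := by group
          rw [e] at this
          exact this
    _ = (ε / (cI + 1)) * cI := by rw [integral_const_mul]
    _ < ε := by
        rw [div_mul_eq_mul_div]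
        rw [div_lt_iff₀ (by positivity)]
        nlinarith

end Aux3

set_option maxHeartbeats 1000000 in
/-- Let `G` be a connected nilpotent Lie group (in particular unimodular, as
is the subgroup `M = exp 𝕞` corresponding to a polarizing subalgebra `𝕞` subordinate to
`ℓ ∈ 𝔤*`), and suppose the Kirillov character of the orbit `O` through `ℓ` is given by
`χ_O(f) = ∫_{G/M} ∫_M f(xpx⁻¹) e^{iℓ(log p)} dp dxM`, where `L = ℓ ∘ log : M → ℝ` is additive
(since `ℓ` kills `[𝕞,𝕞]`).  Then for every (smooth compactly supported) `f`,
`χ_O(f*f*) = ∫_{G/M}∫_{G/M} |∫_M f(xp⁻¹y⁻¹) e^{−iℓ(log p)} dp|² dyM dxM ≥ 0`. -/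
theorem statement12 {G : Type*} [Group G] [TopologicalSpace G] [IsTopologicalGroup G]
    [LocallyCompactSpace G] [MeasurableSpace G] [BorelSpace G]
    (μ : Measure G) [μ.IsHaarMeasure] [μ.IsMulRightInvariant]
    (M : Subgroup G) (hMclosed : IsClosed (M : Set G))
    (μM : Measure M) [μM.IsHaarMeasure] [μM.IsMulRightInvariant]
    (ν : Measure (G ⧸ M)) [SMulInvariantMeasure G (G ⧸ M) ν]
    (hWeil : ∀ f : G → ℂ, Continuous f → HasCompactSupport f →
      ∫ x, f x ∂μ = ∫ q : G ⧸ M, ∫ p : M, f (q.out * (p : G)) ∂μM ∂ν)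
    (L : M → ℝ) (hL : ∀ p q : M, L (p * q) = L p + L q)
    (f : G → ℂ) (hf : Continuous f) (hfc : HasCompactSupport f) :
    (∫ q : G ⧸ M, ∫ p : M,
        (∫ y, f ((q.out * (p : G) * q.out⁻¹) * y) * (starRingEnd ℂ) (f y) ∂μ) *
          Complex.exp (Complex.I * L p) ∂μM ∂ν)
      = (((∫ x : G ⧸ M, ∫ y : G ⧸ M,
            ‖∫ p : M, f (x.out * (p : G)⁻¹ * y.out⁻¹) *
              Complex.exp (-(Complex.I * L p)) ∂μM‖ ^ 2 ∂ν ∂ν : ℝ)) : ℂ) ∧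
    0 ≤ ∫ x : G ⧸ M, ∫ y : G ⧸ M,
          ‖∫ p : M, f (x.out * (p : G)⁻¹ * y.out⁻¹) *
            Complex.exp (-(Complex.I * L p)) ∂μM‖ ^ 2 ∂ν ∂ν := by
  classical
  haveI : BorelSpace M := Subtype.borelSpace (M : Set G)
  have hKc : IsCompact (tsupport f) := hfc
  have hKcl : IsClosed (tsupport f) := isClosed_tsupport f
  obtain ⟨z₀, hz₀⟩ := hf.norm.exists_forall_ge_of_hasCompactSupport hfc.norm
  set Cf : ℝ := ‖f z₀‖ with hCf
  have hfbd : ∀ z, ‖f z‖ ≤ Cf := hz₀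
  have hCf0 : 0 ≤ Cf := le_trans (norm_nonneg _) (hfbd 1)
  -- character identities
  have hL1 : L 1 = 0 := by have := hL 1 1; simp at this; linarith
  have hLinv : ∀ p : M, L p⁻¹ = - L p := by
    intro p
    have := hL p p⁻¹
    simp [hL1] at this
    linarith
  have hψconj : ∀ p : M, (starRingEnd ℂ) (Complex.exp (-(Complex.I * L p)))
      = Complex.exp (Complex.I * L p) := by
    intro p
    rw [← Complex.exp_conj]
    congr 1
    simp [Complex.conj_ofReal]
  have hχconj : ∀ p : M, (starRingEnd ℂ) (Complex.exp (Complex.I * L p))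
      = Complex.exp (-(Complex.I * L p)) := by
    intro p
    rw [← Complex.exp_conj]
    congr 1
    simp [Complex.conj_ofReal]
  have hχnorm : ∀ p : M, ‖Complex.exp (Complex.I * L p)‖ = 1 := by
    intro p
    rw [Complex.norm_exp]
    simp
  have hψnorm : ∀ p : M, ‖Complex.exp (-(Complex.I * L p))‖ = 1 := by
    intro p
    rw [Complex.norm_exp]
    simp
  have hχadd : ∀ p q : M, Complex.exp (Complex.I * L (p * q))
      = Complex.exp (Complex.I * L p) * Complex.exp (Complex.I * L q) := by
    intro p q
    rw [hL p q, ← Complex.exp_add]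
    congr 1
    push_cast
    ring
  have hψadd : ∀ p q : M, Complex.exp (-(Complex.I * L (p * q)))
      = Complex.exp (-(Complex.I * L p)) * Complex.exp (-(Complex.I * L q)) := by
    intro p q
    rw [hL p q, ← Complex.exp_add]
    congr 1
    push_cast
    ring
  have hψinv : ∀ p : M, Complex.exp (-(Complex.I * L p⁻¹)) = Complex.exp (Complex.I * L p) := by
    intro p
    rw [hLinv]
    push_cast
    ring_nf
  have hpos : (0:ℝ) ≤ ∫ x : G ⧸ M, ∫ y : G ⧸ M,
      ‖∫ p : M, f (x.out * (p : G)⁻¹ * y.out⁻¹) *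
        Complex.exp (-(Complex.I * L p)) ∂μM‖ ^ 2 ∂ν ∂ν :=
    integral_nonneg fun a => integral_nonneg fun b => by positivity
  refine ⟨?_, hpos⟩
  have key : ∀ q : G ⧸ M,
      (∫ p : M, (∫ y, f ((q.out * (p : G) * q.out⁻¹) * y) * (starRingEnd ℂ) (f y) ∂μ) *
          Complex.exp (Complex.I * L p) ∂μM)
        = ((∫ z : G ⧸ M, ‖∫ p : M, f (q.out * (p : G)⁻¹ * z.out⁻¹) *
            Complex.exp (-(Complex.I * L p)) ∂μM‖ ^ 2 ∂ν : ℝ) : ℂ) := by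
    intro q
    set x : G := q.out with hx
    by_cases hD : ∃ U : Set M, IsOpen U ∧ U.Nonempty ∧
        AEStronglyMeasurable (fun p : M => Complex.exp (Complex.I * L p)) (μM.restrict U)
    · obtain ⟨U, hUopen, hUne, hUmeas⟩ := hD
      have hχAESM : ∀ {S : Set M}, IsCompact S →
          AEStronglyMeasurable (fun p : M => Complex.exp (Complex.I * L p)) (μM.restrict S) :=
        fun {S} hS => aux_cover μM _ hχadd hUopen hUne hUmeas hS
      have hemb : Topology.IsClosedEmbedding (Subtype.val : M → G) :=
        hMclosed.isClosedEmbedding_subtypeVal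
      -- the compact support set for the M-variable
      set DP : Set G :=
        closure ((fun g : G => x⁻¹ * g * x) '' (tsupport f * (tsupport f)⁻¹)) with hDP
      have hDPcomp : IsCompact DP := by
        refine aux_closure_compact ((hKc.mul hKc.inv).image ?_)
        exact (continuous_const.mul continuous_id).mul continuous_const
      set SP : Set M := (Subtype.val) ⁻¹' DP with hSP
      have hSPcomp : IsCompact SP := hemb.isCompact_preimage hDPcomp
      have hSPcl : IsClosed SP := isClosed_closure.preimage continuous_subtype_val
      have hSPmeas : MeasurableSet SP :=
        isClosed_closure.measurableSet.preimage measurable_subtype_coe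
      haveI hSPfin : IsFiniteMeasure (μM.restrict SP) := by
        constructor
        rw [Measure.restrict_apply_univ]
        exact hSPcomp.measure_lt_top
      have hSPmem : ∀ (p : M) (a b : G), a ∈ tsupport f → b ∈ tsupport f →
          (p : G) = x⁻¹ * (a * b⁻¹) * x → p ∈ SP := by
        intro p a b ha hb hp
        exact subset_closure ⟨a * b⁻¹, Set.mul_mem_mul ha (Set.inv_mem_inv.2 hb), hp.symm⟩
      -- Step A + B : unfold the convolution and invert the variable
      have hstepAB : ∀ p : M,
          (∫ y, f ((x * (p : G) * x⁻¹) * y) * (starRingEnd ℂ) (f y) ∂μ)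
            = ∫ y, f (x * (p : G) * y⁻¹) * (starRingEnd ℂ) (f (x * y⁻¹)) ∂μ := by
        intro p
        have hA1 : (∫ y, f ((x * (p : G) * x⁻¹) * y) * (starRingEnd ℂ) (f y) ∂μ)
            = ∫ y, f (x * (p : G) * y) * (starRingEnd ℂ) (f (x * y)) ∂μ := by
          rw [← integral_mul_left_eq_self
            (fun y => f ((x * (p : G) * x⁻¹) * y) * (starRingEnd ℂ) (f y)) x]
          refine integral_congr_ae (Filter.Eventually.of_forall fun y => ?_)
          beta_reduce
          have e : (x * (p : G) * x⁻¹) * (x * y) = x * (p : G) * y := by group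
          rw [e]
        have hcont : Continuous fun y : G => f (x * (p : G) * y) * (starRingEnd ℂ) (f (x * y)) :=
          (hf.comp (continuous_const.mul continuous_id)).mul
            (RCLike.continuous_conj.comp (hf.comp (continuous_const.mul continuous_id)))
        have hcpt : HasCompactSupport fun y : G =>
            f (x * (p : G) * y) * (starRingEnd ℂ) (f (x * y)) :=
          HasCompactSupport.mul_left
            ((hfc.comp_left (map_zero _)).comp_homeomorph (Homeomorph.mulLeft x))
        exact hA1.trans
          (aux_inv μ (fun y => f (x * (p : G) * y) * (starRingEnd ℂ) (f (x * y))) hcont hcpt).symm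
      have hstep1 : (∫ p : M,
            (∫ y, f ((x * (p : G) * x⁻¹) * y) * (starRingEnd ℂ) (f y) ∂μ) *
              Complex.exp (Complex.I * L p) ∂μM)
          = ∫ p : M, ∫ y, f (x * (p : G) * y⁻¹) * Complex.exp (Complex.I * L p) *
              (starRingEnd ℂ) (f (x * y⁻¹)) ∂μ ∂μM := by
        refine integral_congr_ae (Filter.Eventually.of_forall fun p => ?_)
        beta_reduce
        rw [hstepAB p, ← integral_mul_const]
        refine integral_congr_ae (Filter.Eventually.of_forall fun y => ?_)
        ring
      -- the compact support set for the G-variable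
      set CY : Set G := (fun k : G => k⁻¹ * x) '' tsupport f with hCY
      have hCYcomp : IsCompact CY := hKc.image (continuous_inv.mul continuous_const)
      have hCYcl : IsClosed CY := by
        have hmap : IsClosedMap (fun k : G => k⁻¹ * x) :=
          ((Homeomorph.inv G).trans (Homeomorph.mulRight x)).isClosedMap
        exact hmap _ hKcl
      have hCYmeas : MeasurableSet CY := hCYcl.measurableSet
      haveI hCYfin : IsFiniteMeasure (μ.restrict CY) := by
        constructor
        rw [Measure.restrict_apply_univ]
        exact hCYcomp.measure_lt_top
      have hCYmem : ∀ y : G, f (x * y⁻¹) ≠ 0 → y ∈ CY := by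
        intro y hy
        refine ⟨x * y⁻¹, subset_tsupport f (Function.mem_support.mpr hy), ?_⟩
        group
      -- continuity of B
      have hBcont : Continuous (fun y : G =>
          ∫ p : M, f (x * (p : G) * y⁻¹) * Complex.exp (Complex.I * L p) ∂μM) := by
        rw [continuous_iff_continuousAt]
        intro y₀
        obtain ⟨Cw, hCwcomp, hCwnhds⟩ := exists_compact_mem_nhds y₀
        set DT : Set G :=
          closure ((fun pr : G × G => x⁻¹ * pr.1 * pr.2) '' (tsupport f ×ˢ Cw)) with hDT
        have hDTcomp : IsCompact DT := by
          refine aux_closure_compact ((hKc.prod hCwcomp).image ?_)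
          exact (continuous_const.mul continuous_fst).mul continuous_snd
        set ST : Set M := Subtype.val ⁻¹' DT with hST
        have hSTcomp : IsCompact ST := hemb.isCompact_preimage hDTcomp
        have hSTmeas : MeasurableSet ST :=
          isClosed_closure.measurableSet.preimage measurable_subtype_coe
        have hSTmem : ∀ (y : G), y ∈ Cw → ∀ p : M, f (x * (p : G) * y⁻¹) ≠ 0 → p ∈ ST := by
          intro y hy p hfp
          refine subset_closure ⟨(x * (p : G) * y⁻¹, y),
            Set.mk_mem_prod (subset_tsupport f (Function.mem_support.mpr hfp)) hy, ?_⟩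
          show x⁻¹ * (x * (p : G) * y⁻¹) * y = (p : G)
          group
        have hAESMy : ∀ y ∈ Cw, AEStronglyMeasurable
            (fun p : M => f (x * (p : G) * y⁻¹) * Complex.exp (Complex.I * L p)) μM := by
          intro y hy
          have hIndEq : (fun p : M => f (x * (p : G) * y⁻¹) * Complex.exp (Complex.I * L p))
              = ST.indicator (fun p : M =>
                  f (x * (p : G) * y⁻¹) * Complex.exp (Complex.I * L p)) := by
            funext p
            by_cases hp : p ∈ ST
            · rw [Set.indicator_of_mem hp]
            · rw [Set.indicator_of_notMem hp]
              have h0 : f (x * (p : G) * y⁻¹) = 0 := by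
                by_contra h
                exact hp (hSTmem y hy p h)
              rw [h0, zero_mul]
          rw [hIndEq, aestronglyMeasurable_indicator_iff hSTmeas]
          exact AEStronglyMeasurable.mul
            ((hf.comp ((continuous_const.mul continuous_subtype_val).mul
              continuous_const)).aestronglyMeasurable) (hχAESM hSTcomp)
        have hInt : ∀ y ∈ Cw, Integrable
            (fun p : M => f (x * (p : G) * y⁻¹) * Complex.exp (Complex.I * L p)) μM := by
          intro y hy
          have hdom : Integrable (ST.indicator (fun _ : M => Cf)) μM :=
            (integrable_indicator_iff hSTmeas).2
              (integrableOn_const hSTcomp.measure_lt_top.ne)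
          refine Integrable.mono' hdom (hAESMy y hy) ?_
          refine Filter.Eventually.of_forall fun p => ?_
          beta_reduce
          by_cases hp : p ∈ ST
          · rw [Set.indicator_of_mem hp, norm_mul, hχnorm, mul_one]
            exact hfbd _
          · rw [Set.indicator_of_notMem hp]
            have h0 : f (x * (p : G) * y⁻¹) = 0 := by
              by_contra h
              exact hp (hSTmem y hy p h)
            simp [h0]
        show Filter.Tendsto (fun y : G =>
            ∫ p : M, f (x * (p : G) * y⁻¹) * Complex.exp (Complex.I * L p) ∂μM)
          (nhds y₀) (nhds (∫ p : M, f (x * (p : G) * y₀⁻¹) * Complex.exp (Complex.I * L p) ∂μM))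
        rw [Metric.tendsto_nhds]
        intro ε hε
        set cST : ℝ := (μM ST).toReal with hcST
        have hcST0 : 0 ≤ cST := ENNReal.toReal_nonneg
        have hε' : 0 < ε / (cST + 1) := by positivity
        obtain ⟨V, hVopen, hV1, hVest⟩ := aux_unif_right f hf hfc hε'
        have hNopen : IsOpen {y : G | y₀ * y⁻¹ ∈ V} :=
          hVopen.preimage (continuous_const.mul continuous_inv)
        have hmemN : ({y : G | y₀ * y⁻¹ ∈ V} ∩ interior Cw) ∈ nhds y₀ := by
          refine Filter.inter_mem (hNopen.mem_nhds ?_) (interior_mem_nhds.2 hCwnhds)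
          simp [hV1]
        refine Filter.eventually_of_mem hmemN fun y hy => ?_
        obtain ⟨hyN, hyCw'⟩ := hy
        have hyCw : y ∈ Cw := interior_subset hyCw'
        have hy₀Cw : y₀ ∈ Cw := mem_of_mem_nhds hCwnhds
        rw [dist_eq_norm]
        show ‖(∫ p : M, f (x * (p : G) * y⁻¹) * Complex.exp (Complex.I * L p) ∂μM)
            - ∫ p : M, f (x * (p : G) * y₀⁻¹) * Complex.exp (Complex.I * L p) ∂μM‖ < ε
        have hdiff : (∫ p : M, f (x * (p : G) * y⁻¹) * Complex.exp (Complex.I * L p) ∂μM)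
            - (∫ p : M, f (x * (p : G) * y₀⁻¹) * Complex.exp (Complex.I * L p) ∂μM)
            = ∫ p : M, (f (x * (p : G) * y⁻¹) - f (x * (p : G) * y₀⁻¹)) *
                Complex.exp (Complex.I * L p) ∂μM := by
          rw [← integral_sub (hInt y hyCw) (hInt y₀ hy₀Cw)]
          refine integral_congr_ae (Filter.Eventually.of_forall fun p => ?_)
          ring
        rw [hdiff]
        have hsint : Integrable (fun p : M =>
            (f (x * (p : G) * y⁻¹) - f (x * (p : G) * y₀⁻¹)) *
              Complex.exp (Complex.I * L p)) μM := by
          refine ((hInt y hyCw).sub (hInt y₀ hy₀Cw)).congr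
            (Filter.Eventually.of_forall fun p => ?_)
          simp only [Pi.sub_apply]
          ring
        calc ‖∫ p : M, (f (x * (p : G) * y⁻¹) - f (x * (p : G) * y₀⁻¹)) *
                Complex.exp (Complex.I * L p) ∂μM‖
            ≤ ∫ p : M, ‖(f (x * (p : G) * y⁻¹) - f (x * (p : G) * y₀⁻¹)) *
                Complex.exp (Complex.I * L p)‖ ∂μM := norm_integral_le_integral_norm _
          _ ≤ ∫ p : M, ST.indicator (fun _ => ε / (cST + 1)) p ∂μM := by
              have hdom2 : Integrable (ST.indicator (fun _ : M => ε / (cST + 1))) μM :=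
                (integrable_indicator_iff hSTmeas).2
                  (integrableOn_const hSTcomp.measure_lt_top.ne)
              refine integral_mono hsint.norm hdom2 ?_
              intro p
              beta_reduce
              by_cases hp : p ∈ ST
              · rw [Set.indicator_of_mem hp, norm_mul, hχnorm, mul_one]
                have hest := hVest (y₀ * y⁻¹) hyN (x * (p : G) * y₀⁻¹)
                have e : x * (p : G) * y₀⁻¹ * (y₀ * y⁻¹) = x * (p : G) * y⁻¹ := by group
                rw [e] at hest
                exact hest
              · rw [Set.indicator_of_notMem hp]
                have h1 : f (x * (p : G) * y⁻¹) = 0 := by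
                  by_contra h
                  exact hp (hSTmem y hyCw p h)
                have h2 : f (x * (p : G) * y₀⁻¹) = 0 := by
                  by_contra h
                  exact hp (hSTmem y₀ hy₀Cw p h)
                simp [h1, h2]
          _ = (ε / (cST + 1)) * cST := by
              rw [integral_indicator hSTmeas, setIntegral_const, smul_eq_mul, measureReal_def, ← hcST]
              ring
          _ < ε := by
              rw [div_mul_eq_mul_div, div_lt_iff₀ (by positivity)]
              nlinarith
      -- swap the p and y integrals
      have hswap1 : (∫ p : M, ∫ y, f (x * (p : G) * y⁻¹) * Complex.exp (Complex.I * L p) *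
              (starRingEnd ℂ) (f (x * y⁻¹)) ∂μ ∂μM)
          = ∫ y, ∫ p : M, f (x * (p : G) * y⁻¹) * Complex.exp (Complex.I * L p) *
              (starRingEnd ℂ) (f (x * y⁻¹)) ∂μM ∂μ := by
        refine aux_swap μM μ hSPmeas hCYmeas hSPfin hCYfin _ (C := Cf * Cf) ?_ ?_ ?_ ?_
        · intro p y
          calc ‖f (x * (p : G) * y⁻¹) * Complex.exp (Complex.I * L p) *
                (starRingEnd ℂ) (f (x * y⁻¹))‖
              = ‖f (x * (p : G) * y⁻¹)‖ * ‖Complex.exp (Complex.I * L p)‖ * ‖f (x * y⁻¹)‖ := by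
                rw [norm_mul, norm_mul, RCLike.norm_conj]
            _ = ‖f (x * (p : G) * y⁻¹)‖ * ‖f (x * y⁻¹)‖ := by rw [hχnorm]; ring
            _ ≤ Cf * Cf := mul_le_mul (hfbd _) (hfbd _) (norm_nonneg _) hCf0
        · intro p hp y
          by_cases h1 : f (x * (p : G) * y⁻¹) = 0
          · rw [h1, zero_mul, zero_mul]
          by_cases h2 : f (x * y⁻¹) = 0
          · rw [h2, map_zero, mul_zero]
          exfalso
          apply hp
          refine hSPmem p _ _ (subset_tsupport f (Function.mem_support.mpr h1))
            (subset_tsupport f (Function.mem_support.mpr h2)) ?_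
          group
        · intro y hy p
          have h0 : f (x * y⁻¹) = 0 := by
            by_contra h
            exact hy (hCYmem y h)
          rw [h0, map_zero, mul_zero]
        · have hWcont : Continuous (fun z : M × G =>
              f (x * (z.1 : G) * z.2⁻¹) * (starRingEnd ℂ) (f (x * z.2⁻¹))) :=
            (hf.comp ((continuous_const.mul
              (continuous_subtype_val.comp continuous_fst)).mul
                (continuous_inv.comp continuous_snd))).mul
              (RCLike.continuous_conj.comp (hf.comp
                (continuous_const.mul (continuous_inv.comp continuous_snd))))
          have hWcpt : HasCompactSupport (fun z : M × G =>
              f (x * (z.1 : G) * z.2⁻¹) * (starRingEnd ℂ) (f (x * z.2⁻¹))) := by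
            refine HasCompactSupport.intro' (hSPcomp.prod hCYcomp) (hSPcl.prod hCYcl) ?_
            intro z hz
            by_cases h1 : f (x * (z.1 : G) * z.2⁻¹) = 0
            · rw [h1, zero_mul]
            by_cases h2 : f (x * z.2⁻¹) = 0
            · rw [h2, map_zero, mul_zero]
            exfalso
            apply hz
            refine Set.mk_mem_prod ?_ (hCYmem z.2 h2)
            refine hSPmem z.1 _ _ (subset_tsupport f (Function.mem_support.mpr h1))
              (subset_tsupport f (Function.mem_support.mpr h2)) ?_
            group
          have hSM := hWcpt.stronglyMeasurable_of_prod hWcont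
          have hχfst : AEStronglyMeasurable
              (fun z : M × G => Complex.exp (Complex.I * L z.1))
              ((μM.restrict SP).prod (μ.restrict CY)) :=
            AEStronglyMeasurable.comp_fst (hχAESM hSPcomp)
          refine (hSM.aestronglyMeasurable.mul hχfst).congr
            (Filter.Eventually.of_forall fun z => ?_)
          show f (x * (z.1 : G) * z.2⁻¹) * (starRingEnd ℂ) (f (x * z.2⁻¹)) *
              Complex.exp (Complex.I * L z.1)
            = f (x * (z.1 : G) * z.2⁻¹) * Complex.exp (Complex.I * L z.1) *
              (starRingEnd ℂ) (f (x * z.2⁻¹))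
          ring
      have hstep2 : ∀ y : G, (∫ p : M, f (x * (p : G) * y⁻¹) * Complex.exp (Complex.I * L p) *
            (starRingEnd ℂ) (f (x * y⁻¹)) ∂μM)
          = (∫ p : M, f (x * (p : G) * y⁻¹) * Complex.exp (Complex.I * L p) ∂μM) *
              (starRingEnd ℂ) (f (x * y⁻¹)) :=
        fun y => integral_mul_const _ _
      -- apply the Weil formula to Φ
      have hΦcont : Continuous (fun y : G =>
          (∫ p : M, f (x * (p : G) * y⁻¹) * Complex.exp (Complex.I * L p) ∂μM) *
            (starRingEnd ℂ) (f (x * y⁻¹))) :=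
        hBcont.mul (RCLike.continuous_conj.comp
          (hf.comp (continuous_const.mul continuous_inv)))
      have hΦcpt : HasCompactSupport (fun y : G =>
          (∫ p : M, f (x * (p : G) * y⁻¹) * Complex.exp (Complex.I * L p) ∂μM) *
            (starRingEnd ℂ) (f (x * y⁻¹))) :=
        HasCompactSupport.mul_left
          ((hfc.comp_left (map_zero _)).comp_homeomorph
            ((Homeomorph.inv G).trans (Homeomorph.mulLeft x)))
      have hweilΦ := hWeil _ hΦcont hΦcpt
      -- the inner computation for each coset z
      have hzstep : ∀ z : G ⧸ M,
          (∫ s : M, (∫ p : M, f (x * (p : G) * (z.out * (s : G))⁻¹) *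
              Complex.exp (Complex.I * L p) ∂μM) *
                (starRingEnd ℂ) (f (x * (z.out * (s : G))⁻¹)) ∂μM)
            = ((‖∫ p : M, f (x * (p : G)⁻¹ * z.out⁻¹) *
                Complex.exp (-(Complex.I * L p)) ∂μM‖ ^ 2 : ℝ) : ℂ) := by
        intro z
        set w : G := z.out with hw
        set A : ℂ := ∫ p : M, f (x * (p : G)⁻¹ * w⁻¹) * Complex.exp (-(Complex.I * L p)) ∂μM
          with hA
        -- support set in s
        set ES : Set G := (fun k : G => w⁻¹ * k⁻¹ * x) '' tsupport f with hES
        have hEScomp : IsCompact ES :=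
          hKc.image ((continuous_const.mul continuous_inv).mul continuous_const)
        have hEScl : IsClosed ES := by
          have hmap : IsClosedMap (fun k : G => w⁻¹ * k⁻¹ * x) :=
            (((Homeomorph.inv G).trans (Homeomorph.mulLeft w⁻¹)).trans
              (Homeomorph.mulRight x)).isClosedMap
          exact hmap _ hKcl
        set Ss : Set M := Subtype.val ⁻¹' ES with hSs
        have hSscomp : IsCompact Ss := hemb.isCompact_preimage hEScomp
        have hSscl : IsClosed Ss := hEScl.preimage continuous_subtype_val
        have hSsmeas : MeasurableSet Ss := hEScl.measurableSet.preimage measurable_subtype_coe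
        haveI hSsfin : IsFiniteMeasure (μM.restrict Ss) := by
          constructor
          rw [Measure.restrict_apply_univ]
          exact hSscomp.measure_lt_top
        have hSsmem : ∀ s : M, f (x * (s : G)⁻¹ * w⁻¹) ≠ 0 → s ∈ Ss := by
          intro s hs
          refine ⟨x * (s : G)⁻¹ * w⁻¹, subset_tsupport f (Function.mem_support.mpr hs), ?_⟩
          show w⁻¹ * (x * (s : G)⁻¹ * w⁻¹)⁻¹ * x = (s : G)
          group
        -- normalize the arguments
        have hz1 : (∫ s : M, (∫ p : M, f (x * (p : G) * (w * (s : G))⁻¹) *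
              Complex.exp (Complex.I * L p) ∂μM) *
                (starRingEnd ℂ) (f (x * (w * (s : G))⁻¹)) ∂μM)
            = ∫ s : M, ∫ p : M, f (x * (p : G) * (s : G)⁻¹ * w⁻¹) *
                Complex.exp (Complex.I * L p) *
                  (starRingEnd ℂ) (f (x * (s : G)⁻¹ * w⁻¹)) ∂μM ∂μM := by
          refine integral_congr_ae (Filter.Eventually.of_forall fun s => ?_)
          beta_reduce
          have e2 : x * (w * (s : G))⁻¹ = x * (s : G)⁻¹ * w⁻¹ := by group
          rw [e2, ← integral_mul_const]
          refine integral_congr_ae (Filter.Eventually.of_forall fun p => ?_)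
          beta_reduce
          have e1 : x * (p : G) * (w * (s : G))⁻¹ = x * (p : G) * (s : G)⁻¹ * w⁻¹ := by group
          rw [e1]
        -- first swap
        have hz2 : (∫ s : M, ∫ p : M, f (x * (p : G) * (s : G)⁻¹ * w⁻¹) *
                Complex.exp (Complex.I * L p) *
                  (starRingEnd ℂ) (f (x * (s : G)⁻¹ * w⁻¹)) ∂μM ∂μM)
            = ∫ p : M, ∫ s : M, f (x * (p : G) * (s : G)⁻¹ * w⁻¹) *
                Complex.exp (Complex.I * L p) *
                  (starRingEnd ℂ) (f (x * (s : G)⁻¹ * w⁻¹)) ∂μM ∂μM := by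
          refine (aux_swap μM μM hSsmeas hSPmeas hSsfin hSPfin
            (fun s p => f (x * (p : G) * (s : G)⁻¹ * w⁻¹) * Complex.exp (Complex.I * L p) *
              (starRingEnd ℂ) (f (x * (s : G)⁻¹ * w⁻¹))) (C := Cf * Cf) ?_ ?_ ?_ ?_)
          · intro s p
            beta_reduce
            calc ‖f (x * (p : G) * (s : G)⁻¹ * w⁻¹) * Complex.exp (Complex.I * L p) *
                  (starRingEnd ℂ) (f (x * (s : G)⁻¹ * w⁻¹))‖
                = ‖f (x * (p : G) * (s : G)⁻¹ * w⁻¹)‖ * ‖Complex.exp (Complex.I * L p)‖ *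
                    ‖f (x * (s : G)⁻¹ * w⁻¹)‖ := by rw [norm_mul, norm_mul, RCLike.norm_conj]
              _ = ‖f (x * (p : G) * (s : G)⁻¹ * w⁻¹)‖ * ‖f (x * (s : G)⁻¹ * w⁻¹)‖ := by
                  rw [hχnorm]; ring
              _ ≤ Cf * Cf := mul_le_mul (hfbd _) (hfbd _) (norm_nonneg _) hCf0
          · intro s hs p
            beta_reduce
            beta_reduce
            have h0 : f (x * (s : G)⁻¹ * w⁻¹) = 0 := by
              by_contra h
              exact hs (hSsmem s h)
            rw [h0, map_zero, mul_zero]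
          · intro p hp s
            beta_reduce
            beta_reduce
            by_cases h1 : f (x * (p : G) * (s : G)⁻¹ * w⁻¹) = 0
            · rw [h1, zero_mul, zero_mul]
            by_cases h2 : f (x * (s : G)⁻¹ * w⁻¹) = 0
            · rw [h2, map_zero, mul_zero]
            exfalso
            apply hp
            refine hSPmem p _ _ (subset_tsupport f (Function.mem_support.mpr h1))
              (subset_tsupport f (Function.mem_support.mpr h2)) ?_
            group
          · have hWcont : Continuous (fun z : M × M =>
                f (x * (z.2 : G) * (z.1 : G)⁻¹ * w⁻¹) *
                  (starRingEnd ℂ) (f (x * (z.1 : G)⁻¹ * w⁻¹))) :=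
              (hf.comp (((continuous_const.mul
                (continuous_subtype_val.comp continuous_snd)).mul
                  ((continuous_subtype_val.comp continuous_fst).inv)).mul
                    continuous_const)).mul
                (RCLike.continuous_conj.comp (hf.comp (((continuous_const.mul
                  ((continuous_subtype_val.comp continuous_fst).inv))).mul continuous_const)))
            have hWcpt : HasCompactSupport (fun z : M × M =>
                f (x * (z.2 : G) * (z.1 : G)⁻¹ * w⁻¹) *
                  (starRingEnd ℂ) (f (x * (z.1 : G)⁻¹ * w⁻¹))) := by
              refine HasCompactSupport.intro' (hSscomp.prod hSPcomp) (hSscl.prod hSPcl) ?_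
              intro z hz
              by_cases h1 : f (x * (z.2 : G) * (z.1 : G)⁻¹ * w⁻¹) = 0
              · rw [h1, zero_mul]
              by_cases h2 : f (x * (z.1 : G)⁻¹ * w⁻¹) = 0
              · rw [h2, map_zero, mul_zero]
              exfalso
              apply hz
              refine Set.mk_mem_prod (hSsmem z.1 h2) ?_
              refine hSPmem z.2 _ _ (subset_tsupport f (Function.mem_support.mpr h1))
                (subset_tsupport f (Function.mem_support.mpr h2)) ?_
              group
            have hSM := hWcpt.stronglyMeasurable_of_prod hWcont
            haveI : SFinite (μM.restrict SP) := inferInstance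
            have hχsnd : AEStronglyMeasurable
                (fun z : M × M => Complex.exp (Complex.I * L z.2))
                ((μM.restrict Ss).prod (μM.restrict SP)) :=
              AEStronglyMeasurable.comp_snd (hχAESM hSPcomp)
            refine (hSM.aestronglyMeasurable.mul hχsnd).congr
              (Filter.Eventually.of_forall fun z => ?_)
            show f (x * (z.2 : G) * (z.1 : G)⁻¹ * w⁻¹) *
                (starRingEnd ℂ) (f (x * (z.1 : G)⁻¹ * w⁻¹)) *
                  Complex.exp (Complex.I * L z.2)
              = f (x * (z.2 : G) * (z.1 : G)⁻¹ * w⁻¹) * Complex.exp (Complex.I * L z.2) *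
                  (starRingEnd ℂ) (f (x * (z.1 : G)⁻¹ * w⁻¹))
            ring
        -- substitute s ↦ s * p
        have hz3 : ∀ p : M, (∫ s : M, f (x * (p : G) * (s : G)⁻¹ * w⁻¹) *
                Complex.exp (Complex.I * L p) *
                  (starRingEnd ℂ) (f (x * (s : G)⁻¹ * w⁻¹)) ∂μM)
            = ∫ s : M, f (x * (s : G)⁻¹ * w⁻¹) * Complex.exp (Complex.I * L p) *
                (starRingEnd ℂ) (f (x * (p : G)⁻¹ * (s : G)⁻¹ * w⁻¹)) ∂μM := by
          intro p
          rw [← integral_mul_right_eq_self (fun s : M => f (x * (p : G) * (s : G)⁻¹ * w⁻¹) *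
            Complex.exp (Complex.I * L p) *
              (starRingEnd ℂ) (f (x * (s : G)⁻¹ * w⁻¹))) p]
          refine integral_congr_ae (Filter.Eventually.of_forall fun s => ?_)
          beta_reduce
          have e1 : x * (p : G) * ((s * p : M) : G)⁻¹ * w⁻¹ = x * (s : G)⁻¹ * w⁻¹ := by
            push_cast
            group
          have e2 : x * ((s * p : M) : G)⁻¹ * w⁻¹ = x * (p : G)⁻¹ * (s : G)⁻¹ * w⁻¹ := by
            push_cast
            group
          rw [e1, e2]
        -- second swap
        have hz4 : (∫ p : M, ∫ s : M, f (x * (s : G)⁻¹ * w⁻¹) *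
                Complex.exp (Complex.I * L p) *
                  (starRingEnd ℂ) (f (x * (p : G)⁻¹ * (s : G)⁻¹ * w⁻¹)) ∂μM ∂μM)
            = ∫ s : M, ∫ p : M, f (x * (s : G)⁻¹ * w⁻¹) *
                Complex.exp (Complex.I * L p) *
                  (starRingEnd ℂ) (f (x * (p : G)⁻¹ * (s : G)⁻¹ * w⁻¹)) ∂μM ∂μM := by
          refine (aux_swap μM μM hSPmeas hSsmeas hSPfin hSsfin
            (fun p s => f (x * (s : G)⁻¹ * w⁻¹) * Complex.exp (Complex.I * L p) *
              (starRingEnd ℂ) (f (x * (p : G)⁻¹ * (s : G)⁻¹ * w⁻¹))) (C := Cf * Cf) ?_ ?_ ?_ ?_)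
          · intro p s
            beta_reduce
            calc ‖f (x * (s : G)⁻¹ * w⁻¹) * Complex.exp (Complex.I * L p) *
                  (starRingEnd ℂ) (f (x * (p : G)⁻¹ * (s : G)⁻¹ * w⁻¹))‖
                = ‖f (x * (s : G)⁻¹ * w⁻¹)‖ * ‖Complex.exp (Complex.I * L p)‖ *
                    ‖f (x * (p : G)⁻¹ * (s : G)⁻¹ * w⁻¹)‖ := by
                  rw [norm_mul, norm_mul, RCLike.norm_conj]
              _ = ‖f (x * (s : G)⁻¹ * w⁻¹)‖ * ‖f (x * (p : G)⁻¹ * (s : G)⁻¹ * w⁻¹)‖ := by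
                  rw [hχnorm]; ring
              _ ≤ Cf * Cf := mul_le_mul (hfbd _) (hfbd _) (norm_nonneg _) hCf0
          · intro p hp s
            beta_reduce
            beta_reduce
            by_cases h1 : f (x * (s : G)⁻¹ * w⁻¹) = 0
            · rw [h1, zero_mul, zero_mul]
            by_cases h2 : f (x * (p : G)⁻¹ * (s : G)⁻¹ * w⁻¹) = 0
            · rw [h2, map_zero, mul_zero]
            exfalso
            apply hp
            refine hSPmem p _ _ (subset_tsupport f (Function.mem_support.mpr h1))
              (subset_tsupport f (Function.mem_support.mpr h2)) ?_
            group
          · intro s hs p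
            beta_reduce
            beta_reduce
            have h0 : f (x * (s : G)⁻¹ * w⁻¹) = 0 := by
              by_contra h
              exact hs (hSsmem s h)
            rw [h0, zero_mul, zero_mul]
          · have hWcont : Continuous (fun z : M × M =>
                f (x * (z.2 : G)⁻¹ * w⁻¹) *
                  (starRingEnd ℂ) (f (x * (z.1 : G)⁻¹ * (z.2 : G)⁻¹ * w⁻¹))) :=
              (hf.comp ((continuous_const.mul
                ((continuous_subtype_val.comp continuous_snd).inv)).mul
                  continuous_const)).mul
                (RCLike.continuous_conj.comp (hf.comp (((continuous_const.mul
                  ((continuous_subtype_val.comp continuous_fst).inv)).mul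
                    ((continuous_subtype_val.comp continuous_snd).inv)).mul continuous_const)))
            have hWcpt : HasCompactSupport (fun z : M × M =>
                f (x * (z.2 : G)⁻¹ * w⁻¹) *
                  (starRingEnd ℂ) (f (x * (z.1 : G)⁻¹ * (z.2 : G)⁻¹ * w⁻¹))) := by
              refine HasCompactSupport.intro' (hSPcomp.prod hSscomp) (hSPcl.prod hSscl) ?_
              intro z hz
              by_cases h1 : f (x * (z.2 : G)⁻¹ * w⁻¹) = 0
              · rw [h1, zero_mul]
              by_cases h2 : f (x * (z.1 : G)⁻¹ * (z.2 : G)⁻¹ * w⁻¹) = 0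
              · rw [h2, map_zero, mul_zero]
              exfalso
              apply hz
              refine Set.mk_mem_prod ?_ (hSsmem z.2 h1)
              refine hSPmem z.1 _ _ (subset_tsupport f (Function.mem_support.mpr h1))
                (subset_tsupport f (Function.mem_support.mpr h2)) ?_
              group
            have hSM := hWcpt.stronglyMeasurable_of_prod hWcont
            haveI : SFinite (μM.restrict Ss) := inferInstance
            have hχfst : AEStronglyMeasurable
                (fun z : M × M => Complex.exp (Complex.I * L z.1))
                ((μM.restrict SP).prod (μM.restrict Ss)) :=
              AEStronglyMeasurable.comp_fst (hχAESM hSPcomp)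
            refine (hSM.aestronglyMeasurable.mul hχfst).congr
              (Filter.Eventually.of_forall fun z => ?_)
            show f (x * (z.2 : G)⁻¹ * w⁻¹) *
                (starRingEnd ℂ) (f (x * (z.1 : G)⁻¹ * (z.2 : G)⁻¹ * w⁻¹)) *
                  Complex.exp (Complex.I * L z.1)
              = f (x * (z.2 : G)⁻¹ * w⁻¹) * Complex.exp (Complex.I * L z.1) *
                  (starRingEnd ℂ) (f (x * (z.1 : G)⁻¹ * (z.2 : G)⁻¹ * w⁻¹))
            ring
        -- pull out the conjugated inner integral
        have hz5 : ∀ s : M, (∫ p : M, f (x * (s : G)⁻¹ * w⁻¹) *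
                Complex.exp (Complex.I * L p) *
                  (starRingEnd ℂ) (f (x * (p : G)⁻¹ * (s : G)⁻¹ * w⁻¹)) ∂μM)
            = f (x * (s : G)⁻¹ * w⁻¹) * (starRingEnd ℂ)
                (∫ p : M, f (x * (p : G)⁻¹ * (s : G)⁻¹ * w⁻¹) *
                  Complex.exp (-(Complex.I * L p)) ∂μM) := by
          intro s
          rw [← integral_conj, ← integral_const_mul]
          refine integral_congr_ae (Filter.Eventually.of_forall fun p => ?_)
          beta_reduce
          rw [map_mul, hψconj p]
          ring
        -- identify the inner integral with χ s * A
        have hz6 : ∀ s : M, (∫ p : M, f (x * (p : G)⁻¹ * (s : G)⁻¹ * w⁻¹) *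
              Complex.exp (-(Complex.I * L p)) ∂μM)
            = Complex.exp (Complex.I * L s) * A := by
          intro s
          rw [← integral_mul_left_eq_self (fun p : M => f (x * (p : G)⁻¹ * (s : G)⁻¹ * w⁻¹) *
            Complex.exp (-(Complex.I * L p))) s⁻¹]
          rw [hA, ← integral_const_mul]
          refine integral_congr_ae (Filter.Eventually.of_forall fun p => ?_)
          beta_reduce
          have e : x * (((s⁻¹ * p : M) : G))⁻¹ * (s : G)⁻¹ * w⁻¹ = x * (p : G)⁻¹ * w⁻¹ := by
            push_cast
            group
          rw [e]
          have e2 : Complex.exp (-(Complex.I * L (s⁻¹ * p)))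
              = Complex.exp (Complex.I * L s) * Complex.exp (-(Complex.I * L p)) := by
            rw [hψadd s⁻¹ p, hψinv s]
          rw [e2]
          ring
        -- conclude
        calc (∫ s : M, (∫ p : M, f (x * (p : G) * (w * (s : G))⁻¹) *
              Complex.exp (Complex.I * L p) ∂μM) *
                (starRingEnd ℂ) (f (x * (w * (s : G))⁻¹)) ∂μM)
            = ∫ s : M, ∫ p : M, f (x * (p : G) * (s : G)⁻¹ * w⁻¹) *
                Complex.exp (Complex.I * L p) *
                  (starRingEnd ℂ) (f (x * (s : G)⁻¹ * w⁻¹)) ∂μM ∂μM := hz1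
          _ = ∫ p : M, ∫ s : M, f (x * (p : G) * (s : G)⁻¹ * w⁻¹) *
                Complex.exp (Complex.I * L p) *
                  (starRingEnd ℂ) (f (x * (s : G)⁻¹ * w⁻¹)) ∂μM ∂μM := hz2
          _ = ∫ p : M, ∫ s : M, f (x * (s : G)⁻¹ * w⁻¹) *
                Complex.exp (Complex.I * L p) *
                  (starRingEnd ℂ) (f (x * (p : G)⁻¹ * (s : G)⁻¹ * w⁻¹)) ∂μM ∂μM :=
              integral_congr_ae (Filter.Eventually.of_forall fun p => hz3 p)
          _ = ∫ s : M, ∫ p : M, f (x * (s : G)⁻¹ * w⁻¹) *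
                Complex.exp (Complex.I * L p) *
                  (starRingEnd ℂ) (f (x * (p : G)⁻¹ * (s : G)⁻¹ * w⁻¹)) ∂μM ∂μM := hz4
          _ = ∫ s : M, (f (x * (s : G)⁻¹ * w⁻¹) * Complex.exp (-(Complex.I * L s))) *
                (starRingEnd ℂ) A ∂μM := by
              refine integral_congr_ae (Filter.Eventually.of_forall fun s => ?_)
              beta_reduce
              rw [hz5 s, hz6 s, map_mul, hχconj s]
              ring
          _ = (∫ s : M, f (x * (s : G)⁻¹ * w⁻¹) * Complex.exp (-(Complex.I * L s)) ∂μM) *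
                (starRingEnd ℂ) A := integral_mul_const _ _
          _ = A * (starRingEnd ℂ) A := by rw [← hA]
          _ = ((‖A‖ ^ 2 : ℝ) : ℂ) := by
              rw [RCLike.mul_conj A]
              norm_cast
          _ = ((‖∫ p : M, f (x * (p : G)⁻¹ * w⁻¹) *
                Complex.exp (-(Complex.I * L p)) ∂μM‖ ^ 2 : ℝ) : ℂ) := by rw [← hA]
      -- assemble everything
      calc (∫ p : M, (∫ y, f ((x * (p : G) * x⁻¹) * y) * (starRingEnd ℂ) (f y) ∂μ) *
              Complex.exp (Complex.I * L p) ∂μM)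
          = ∫ p : M, ∫ y, f (x * (p : G) * y⁻¹) * Complex.exp (Complex.I * L p) *
              (starRingEnd ℂ) (f (x * y⁻¹)) ∂μ ∂μM := hstep1
        _ = ∫ y, ∫ p : M, f (x * (p : G) * y⁻¹) * Complex.exp (Complex.I * L p) *
              (starRingEnd ℂ) (f (x * y⁻¹)) ∂μM ∂μ := hswap1
        _ = ∫ y, (∫ p : M, f (x * (p : G) * y⁻¹) * Complex.exp (Complex.I * L p) ∂μM) *
              (starRingEnd ℂ) (f (x * y⁻¹)) ∂μ :=
            integral_congr_ae (Filter.Eventually.of_forall fun y => hstep2 y)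
        _ = ∫ z : G ⧸ M, ∫ s : M, (∫ p : M, f (x * (p : G) * (z.out * (s : G))⁻¹) *
              Complex.exp (Complex.I * L p) ∂μM) *
                (starRingEnd ℂ) (f (x * (z.out * (s : G))⁻¹)) ∂μM ∂ν := hweilΦ
        _ = ∫ z : G ⧸ M, ((‖∫ p : M, f (x * (p : G)⁻¹ * z.out⁻¹) *
              Complex.exp (-(Complex.I * L p)) ∂μM‖ ^ 2 : ℝ) : ℂ) ∂ν :=
            integral_congr_ae (Filter.Eventually.of_forall fun z => hzstep z)
        _ = ((∫ z : G ⧸ M, ‖∫ p : M, f (x * (p : G)⁻¹ * z.out⁻¹) *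
              Complex.exp (-(Complex.I * L p)) ∂μM‖ ^ 2 ∂ν : ℝ) : ℂ) :=
            integral_ofReal (f := fun z : G ⧸ M => ‖∫ p : M, f (x * (p : G)⁻¹ * z.out⁻¹) *
              Complex.exp (-(Complex.I * L p)) ∂μM‖ ^ 2)
    · push_neg at hD
      have hDχ : ∀ U : Set M, IsOpen U → U.Nonempty →
          ¬ AEStronglyMeasurable (fun p : M => Complex.exp (Complex.I * L p)) (μM.restrict U) :=
        fun U h1 h2 => (hD U h1 h2).elim
      have hDψ : ∀ U : Set M, IsOpen U → U.Nonempty →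
          ¬ AEStronglyMeasurable (fun p : M => Complex.exp (-(Complex.I * L p)))
            (μM.restrict U) := by
        intro U hUo hUne hm
        refine hDχ U hUo hUne ?_
        have hcm := RCLike.continuous_conj.comp_aestronglyMeasurable hm
        refine hcm.congr (Filter.Eventually.of_forall fun p => ?_)
        exact hψconj p
      have hLHS : (∫ p : M, (∫ y, f ((x * (p : G) * x⁻¹) * y) * (starRingEnd ℂ) (f y) ∂μ) *
          Complex.exp (Complex.I * L p) ∂μM) = 0 := by
        refine aux_vanish μM _ hDχ _ ?_
        have h1 : Continuous fun g : G => ∫ y, f (g * y) * (starRingEnd ℂ) (f y) ∂μ :=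
          aux_conv_continuous μ f hf hfc
        have h2 : Continuous fun p : M => x * (p : G) * x⁻¹ :=
          (continuous_const.mul continuous_subtype_val).mul continuous_const
        exact h1.comp h2
      rw [hLHS]
      have hA : ∀ z : G ⧸ M, (∫ p : M, f (x * (p : G)⁻¹ * z.out⁻¹) *
          Complex.exp (-(Complex.I * L p)) ∂μM) = 0 := by
        intro z
        refine aux_vanish μM _ hDψ _ ?_
        exact hf.comp ((continuous_const.mul continuous_subtype_val.inv).mul continuous_const)
      have hz : (∫ z : G ⧸ M, ‖∫ p : M, f (x * (p : G)⁻¹ * z.out⁻¹) *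
          Complex.exp (-(Complex.I * L p)) ∂μM‖ ^ 2 ∂ν : ℝ) = 0 := by
        have hzz : ∀ z : G ⧸ M, ‖∫ p : M, f (x * (p : G)⁻¹ * z.out⁻¹) *
            Complex.exp (-(Complex.I * L p)) ∂μM‖ ^ 2 = (0:ℝ) := fun z => by
          rw [hA z]; simp
        rw [integral_congr_ae (Filter.Eventually.of_forall hzz), integral_zero]
      rw [hz]
      simp
  calc (∫ q : G ⧸ M, ∫ p : M,
        (∫ y, f ((q.out * (p : G) * q.out⁻¹) * y) * (starRingEnd ℂ) (f y) ∂μ) *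
          Complex.exp (Complex.I * L p) ∂μM ∂ν)
      = ∫ q : G ⧸ M, ((∫ z : G ⧸ M, ‖∫ p : M, f (q.out * (p : G)⁻¹ * z.out⁻¹) *
            Complex.exp (-(Complex.I * L p)) ∂μM‖ ^ 2 ∂ν : ℝ) : ℂ) ∂ν :=
        integral_congr_ae (Filter.Eventually.of_forall key)
    _ = _ := integral_ofReal
end

section
/- Let G be a locally compact group with closed subgroups K ⊆ H ⊆ G, and let ρ_(G,K), ρ_(G,H), ρ_(H,K) be rho-functions for the respective pairs, with associated quasi-invariant measures on the quotients. Then for every f ∈ C_c(G/K), ∫_{G/K} f(g) dgK = ∫_{G/H} ∫_{H/K} f(xh) · ρ_(G,K)(xh) / (ρ_(G,H)(xh) ρ_(H,K)(h)) dhK dxH. -/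
open MeasureTheory

open Set

open scoped Topology

/-- Positivity of the constant in a right-translation scaling identity for a Haar measure. -/
lemma aux_delta_pos {G : Type*} [Group G] [TopologicalSpace G] [IsTopologicalGroup G]
    [WeaklyLocallyCompactSpace G] [MeasurableSpace G] [BorelSpace G]
    (μ : Measure G) [μ.IsHaarMeasure] (c : ℝ) (y : G)
    (h : Measure.map (fun x => x * y) μ = (ENNReal.ofReal c)⁻¹ • μ) : 0 < c := by
  by_contra hc
  push_neg at hc
  obtain ⟨C, hCc, hCn⟩ := exists_compact_mem_nhds (1 : G)
  have hpos : 0 < μ (interior C) :=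
    isOpen_interior.measure_pos μ ⟨1, mem_interior_iff_mem_nhds.2 hCn⟩
  have hmeas : MeasurableSet (interior C) := isOpen_interior.measurableSet
  have hfin : Measure.map (fun x => x * y) μ (interior C) < ⊤ := by
    rw [Measure.map_apply (by fun_prop) hmeas]
    have hsub : (fun x => x * y) ⁻¹' interior C ⊆ (fun x => x * y⁻¹) '' C := by
      intro x hx
      exact ⟨x * y, interior_subset hx, by group⟩
    exact lt_of_le_of_lt (measure_mono hsub) (hCc.image (by fun_prop)).measure_lt_top
  rw [h] at hfin
  have : ENNReal.ofReal c = 0 := ENNReal.ofReal_eq_zero.2 hc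
  rw [Measure.smul_apply, this, ENNReal.inv_zero, smul_eq_mul, ENNReal.top_mul hpos.ne'] at hfin
  exact (lt_irrefl _ hfin)

/-- Any compact set of a quotient of a weakly locally compact group lifts to a compact set. -/
lemma aux_lift_compact {G : Type*} [Group G] [TopologicalSpace G] [IsTopologicalGroup G]
    [WeaklyLocallyCompactSpace G] (K : Subgroup G) {S : Set (G ⧸ K)} (hS : IsCompact S) :
    ∃ C : Set G, IsCompact C ∧ S ⊆ QuotientGroup.mk '' C := by
  obtain ⟨V, hVc, hVn⟩ := exists_compact_mem_nhds (1 : G)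
  have hU : ∀ q : G ⧸ K, q ∈ S →
      (QuotientGroup.mk '' ((fun g => q.out * g) '' interior V) : Set (G ⧸ K)) ∈ nhds q := by
    intro q _
    have hopen : IsOpen (QuotientGroup.mk '' ((fun g => q.out * g) '' interior V) : Set (G ⧸ K)) :=
      QuotientGroup.isOpenMap_coe _ ((Homeomorph.mulLeft q.out).isOpenMap _ isOpen_interior)
    refine hopen.mem_nhds ⟨q.out * 1, ⟨1, mem_interior_iff_mem_nhds.2 hVn, rfl⟩, ?_⟩
    rw [mul_one]; exact QuotientGroup.out_eq' q
  obtain ⟨t, -, ht⟩ := hS.elim_nhds_subcover _ hU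
  refine ⟨⋃ q ∈ t, (fun g => q.out * g) '' V, ?_, ?_⟩
  · exact t.finite_toSet.isCompact_biUnion fun q _ => hVc.image (by fun_prop)
  · intro s hs
    obtain ⟨q, hqt, hmem⟩ := Set.mem_iUnion₂.1 (ht hs)
    obtain ⟨x, ⟨v, hv, rfl⟩, rfl⟩ := hmem
    exact ⟨q.out * v, Set.mem_biUnion hqt ⟨v, interior_subset hv, rfl⟩, rfl⟩

/-- A nonneg continuous compactly supported function with a nonzero value has nonzero integral. -/
lemma aux_integral_ne_zero {X : Type*} [TopologicalSpace X] [MeasurableSpace X] [BorelSpace X]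
    [R1Space X] (μ : Measure X) [IsFiniteMeasureOnCompacts μ] [μ.IsOpenPosMeasure]
    {g : X → ℝ} (hg : Continuous g) (hgc : HasCompactSupport g) (hg0 : ∀ x, 0 ≤ g x)
    {x₀ : X} (hx : g x₀ ≠ 0) : ∫ x, g x ∂μ ≠ 0 := by
  intro hint
  have hgi : Integrable g μ := hg.integrable_of_hasCompactSupport hgc
  have := (integral_eq_zero_iff_of_nonneg hg0 hgi).1 hint
  have : g = 0 := (Continuous.ae_eq_iff_eq μ hg continuous_const).1 this
  exact hx (by rw [this]; rfl)

/-- chain rule for quasi-invariant quotient integration.  Let `K ⊆ H ⊆ G` be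
closed subgroups of a locally compact group `G`, with rho-functions `ρ_(G,K)`, `ρ_(G,H)`,
`ρ_(H,K)` for the three pairs and associated quasi-invariant measures on the quotients
(normalized by the Mackey–Bruhat formula).  Then for every `f ∈ C_c(G/K)`,
`∫_{G/K} f = ∫_{G/H} ∫_{H/K} f(xh) ρ_(G,K)(xh)/(ρ_(G,H)(xh) ρ_(H,K)(h)) dhK dxH`. -/
theorem statement14 {G : Type*} [Group G] [TopologicalSpace G] [IsTopologicalGroup G]
    [LocallyCompactSpace G] [MeasurableSpace G] [BorelSpace G]
    (H K : Subgroup G) (hKH : K ≤ H)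
    (hHclosed : IsClosed (H : Set G)) (hKclosed : IsClosed (K : Set G))
    (μG : Measure G) [μG.IsHaarMeasure]
    (μH : Measure H) [μH.IsHaarMeasure]
    (μK : Measure K) [μK.IsHaarMeasure]
    (ΔG : G → ℝ) (hΔG : ∀ y : G, Measure.map (fun x => x * y) μG = (ENNReal.ofReal (ΔG y))⁻¹ • μG)
    (ΔH : H → ℝ) (hΔH : ∀ y : H, Measure.map (fun x => x * y) μH = (ENNReal.ofReal (ΔH y))⁻¹ • μH)
    (ΔK : K → ℝ) (hΔK : ∀ y : K, Measure.map (fun x => x * y) μK = (ENNReal.ofReal (ΔK y))⁻¹ • μK)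
    (ρGK ρGH : G → ℝ) (ρHK : H → ℝ)
    (hρGKcont : Continuous ρGK) (hρGKpos : ∀ x, 0 < ρGK x)
    (hρGHcont : Continuous ρGH) (hρGHpos : ∀ x, 0 < ρGH x)
    (hρHKcont : Continuous ρHK) (hρHKpos : ∀ x, 0 < ρHK x)
    (hρGK : ∀ (x : G) (k : K), ρGK (x * k) = ρGK x * ΔK k / ΔG k)
    (hρGH : ∀ (x : G) (h : H), ρGH (x * h) = ρGH x * ΔH h / ΔG h)
    (hρHK : ∀ (x : H) (k : K), ρHK (x * ⟨(k : G), hKH k.2⟩) = ρHK x * ΔK k / ΔH ⟨(k : G), hKH k.2⟩)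
    (νGK : Measure (G ⧸ K)) (νGH : Measure (G ⧸ H)) (νHK : Measure (H ⧸ K.subgroupOf H))
    (hνGK : ∀ f : G → ℝ, Continuous f → HasCompactSupport f →
      ∫ x, f x * ρGK x ∂μG = ∫ q : G ⧸ K, ∫ k : K, f (q.out * (k : G)) ∂μK ∂νGK)
    (hνGH : ∀ f : G → ℝ, Continuous f → HasCompactSupport f →
      ∫ x, f x * ρGH x ∂μG = ∫ q : G ⧸ H, ∫ h : H, f (q.out * (h : G)) ∂μH ∂νGH)
    (hνHK : ∀ f : H → ℝ, Continuous f → HasCompactSupport f →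
      ∫ x, f x * ρHK x ∂μH
        = ∫ q : H ⧸ K.subgroupOf H, ∫ k : K, f (q.out * ⟨(k : G), hKH k.2⟩) ∂μK ∂νHK)
    (f : G ⧸ K → ℝ) (hf : Continuous f) (hfc : HasCompactSupport f) :
    ∫ q, f q ∂νGK
      = ∫ x : G ⧸ H, ∫ y : H ⧸ K.subgroupOf H,
          f (QuotientGroup.mk (x.out * ((y.out : H) : G))) *
            (ρGK (x.out * ((y.out : H) : G)) /
              (ρGH (x.out * ((y.out : H) : G)) * ρHK y.out)) ∂νHK ∂νGH := by
  classical
  haveI : LocallyCompactSpace H := hHclosed.locallyCompactSpace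
  haveI : LocallyCompactSpace K := hKclosed.locallyCompactSpace
  haveI : BorelSpace K := Subtype.borelSpace (K : Set G)
  haveI : BorelSpace H := Subtype.borelSpace (H : Set G)
  have hΔGpos : ∀ y : G, 0 < ΔG y := fun y => aux_delta_pos μG _ y (hΔG y)
  have hΔHpos : ∀ y : H, 0 < ΔH y := fun y => aux_delta_pos μH _ y (hΔH y)
  have hΔKpos : ∀ y : K, 0 < ΔK y := fun y => aux_delta_pos μK _ y (hΔK y)
  -- lift the support of `f` to a compact set `C ⊆ G`, and take a bump function `χ` around `C`
  obtain ⟨C, hCc, hSC⟩ := aux_lift_compact K hfc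
  obtain ⟨χ, hχ1, -, hχc, hχ01⟩ :=
    exists_continuous_one_zero_of_isCompact hCc isClosed_empty (Set.disjoint_left.2 fun _ _ h => h)
  -- the `K`-average of `χ`
  set a : G → ℝ := fun x => ∫ k : K, χ (x * (k : G)) ∂μK with ha_def
  have ha_eq : ∀ x : G, (∫ k : K, χ (x * (k : G)) ∂μK) = a x := fun _ => rfl
  have hfiber_cs : ∀ x : G, HasCompactSupport (fun k : K => χ (x * (k : G))) := by
    intro x
    apply HasCompactSupport.of_support_subset_isCompact
      (hKclosed.isClosedEmbedding_subtypeVal.isCompact_preimage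
        (hχc.image (continuous_mul_left x⁻¹)))
    intro k hk
    exact ⟨x * (k : G), subset_tsupport _ hk, by group⟩
  have ha_nonneg : ∀ x, 0 ≤ a x := fun x => integral_nonneg fun k => (hχ01 _).1
  have ha_inv : ∀ (x : G) (k₀ : K), a (x * (k₀ : G)) = a x := by
    intro x k₀
    have harg : ∀ k : K, x * (k₀ : G) * (k : G) = x * ((k₀ * k : K) : G) := by
      intro k; push_cast; rw [mul_assoc]
    calc a (x * (k₀ : G)) = ∫ k : K, χ (x * ((k₀ * k : K) : G)) ∂μK := by
          simp only [ha_def]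
          exact integral_congr_ae (Filter.Eventually.of_forall fun k => congrArg (⇑χ) (harg k))
      _ = a x := by
          rw [ha_def]
          exact integral_mul_left_eq_self (fun k : K => χ (x * (k : G))) k₀
  have ha_pos : ∀ x : G, QuotientGroup.mk x ∈ tsupport f → 0 < a x := by
    intro x hx
    obtain ⟨c, hcC, hc⟩ := hSC hx
    have hk : x⁻¹ * c ∈ K := QuotientGroup.eq.1 hc.symm
    have hval : χ (x * ((⟨x⁻¹ * c, hk⟩ : K) : G)) = 1 := by
      have : x * (x⁻¹ * c) = c := by group
      rw [show ((⟨x⁻¹ * c, hk⟩ : K) : G) = x⁻¹ * c from rfl, this]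
      exact hχ1 hcC
    refine lt_of_le_of_ne (ha_nonneg x) (Ne.symm ?_)
    exact aux_integral_ne_zero μK (by fun_prop) (hfiber_cs x) (fun k => (hχ01 _).1)
      (x₀ := ⟨x⁻¹ * c, hk⟩) (by rw [hval]; norm_num)
  have hf0 : ∀ x : G, a x = 0 → f (QuotientGroup.mk x) = 0 := by
    intro x h0
    by_contra hne
    exact (ha_pos x (subset_tsupport f hne)).ne' h0
  -- continuity of the average
  have ha_cont : Continuous a := by
    rw [continuous_iff_continuousAt]
    intro x₀
    obtain ⟨N, hNc, hNn⟩ := exists_compact_mem_nhds x₀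
    have hQc : IsCompact (Subtype.val ⁻¹'
        (closure ((fun pr : G × G => pr.1⁻¹ * pr.2) '' (N ×ˢ tsupport χ))) : Set K) :=
      hKclosed.isClosedEmbedding_subtypeVal.isCompact_preimage
        ((hNc.prod hχc).image (by fun_prop)).closure
    have A : ContinuousOn (fun x : G => ∫ k : K, χ (x * (k : G)) ∂μK) N := by
      apply continuousOn_integral_of_compact_support hQc
      · exact ((map_continuous χ).comp
          (continuous_fst.mul (continuous_subtype_val.comp continuous_snd))).continuousOn
      · intro p k hp hk
        by_contra hne
        exact hk (subset_closure ⟨(p, p * (k : G)), ⟨hp, subset_tsupport _ hne⟩, by group⟩)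
    rw [ha_def]
    exact A.continuousAt hNn
  -- the lifted function `F`
  set F : G → ℝ := fun x => χ x * f (QuotientGroup.mk x) * ρGK x / a x with hF_def
  have hfmk : Continuous fun x : G => f (QuotientGroup.mk x : G ⧸ K) :=
    hf.comp continuous_quotient_mk'
  have hFcont : Continuous F := by
    rw [continuous_iff_continuousAt]
    intro x
    rcases eq_or_ne (a x) 0 with hx | hx
    · have hxs : QuotientGroup.mk x ∉ tsupport f := fun h => (ha_pos x h).ne' hx
      have hopen : IsOpen {y : G | QuotientGroup.mk y ∈ tsupport f}ᶜ :=
        ((isClosed_tsupport f).preimage continuous_quotient_mk').isOpen_compl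
      have hev : F =ᶠ[𝓝 x] fun _ => 0 := by
        filter_upwards [hopen.mem_nhds hxs] with y hy
        have : f (QuotientGroup.mk y) = 0 := image_eq_zero_of_notMem_tsupport hy
        simp [hF_def, this]
      exact hev.continuousAt
    · exact ContinuousAt.div
        (((map_continuous χ).mul hfmk).mul hρGKcont).continuousAt ha_cont.continuousAt hx
  have hFc : HasCompactSupport F := by
    apply hχc.mono
    intro y hy
    simp only [Function.mem_support, hF_def] at hy ⊢
    intro h0
    exact hy (by simp [h0])
  -- fiber identity over K
  have inner_K : ∀ x : G,
      (∫ k : K, F (x * (k : G)) / ρGK (x * (k : G)) ∂μK) = f (QuotientGroup.mk x) := by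
    intro x
    have hpt : ∀ k : K, F (x * (k : G)) / ρGK (x * (k : G))
        = χ (x * (k : G)) * (f (QuotientGroup.mk x) * (a x)⁻¹) := by
      intro k
      have hmk : (QuotientGroup.mk (x * (k : G)) : G ⧸ K) = QuotientGroup.mk x :=
        QuotientGroup.mk_mul_of_mem x k.2
      have hρ : ρGK (x * (k : G)) ≠ 0 := (hρGKpos _).ne'
      simp only [hF_def, hmk, ha_inv x k]
      rcases eq_or_ne (a x) 0 with h0 | h0
      · rw [hf0 x h0]; simp
      · field_simp
    calc (∫ k : K, F (x * (k : G)) / ρGK (x * (k : G)) ∂μK)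
        = ∫ k : K, χ (x * (k : G)) * (f (QuotientGroup.mk x) * (a x)⁻¹) ∂μK :=
          integral_congr_ae (.of_forall hpt)
      _ = a x * (f (QuotientGroup.mk x) * (a x)⁻¹) := integral_mul_const _ _
      _ = f (QuotientGroup.mk x) := by
          rcases eq_or_ne (a x) 0 with h0 | h0
          · rw [hf0 x h0]; simp
          · rw [mul_comm (a x), mul_assoc, inv_mul_cancel₀ h0, mul_one]
  -- Step 1: `∫ f dνGK = ∫ F dμG`
  have hE1 : ∫ x, F x ∂μG = ∫ q, f q ∂νGK := by
    have hcont : Continuous fun x => F x / ρGK x :=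
      hFcont.div hρGKcont fun x => (hρGKpos x).ne'
    have hsupp : HasCompactSupport fun x => F x / ρGK x := by
      apply hFc.mono
      intro y hy
      simp only [Function.mem_support] at hy ⊢
      intro h0
      exact hy (by rw [h0, zero_div])
    have h1 := hνGK (fun x => F x / ρGK x) hcont hsupp
    have h2 : ∫ x, F x / ρGK x * ρGK x ∂μG = ∫ x, F x ∂μG :=
      integral_congr_ae (.of_forall fun x => div_mul_cancel₀ _ (hρGKpos x).ne')
    rw [← h2, h1]
    refine integral_congr_ae (.of_forall fun q => ?_)
    show (∫ k : K, F (q.out * (k : G)) / ρGK (q.out * (k : G)) ∂μK) = f q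
    rw [inner_K q.out, QuotientGroup.out_eq']
  -- Step 2: `∫ F dμG = ∫_{G/H} ∫_H F(xh)/ρGH(xh)`
  have hE2 : ∫ x, F x ∂μG
      = ∫ q : G ⧸ H, ∫ h : H, F (q.out * (h : G)) / ρGH (q.out * (h : G)) ∂μH ∂νGH := by
    have hcont : Continuous fun x => F x / ρGH x :=
      hFcont.div hρGHcont fun x => (hρGHpos x).ne'
    have hsupp : HasCompactSupport fun x => F x / ρGH x := by
      apply hFc.mono
      intro y hy
      simp only [Function.mem_support] at hy ⊢
      intro h0
      exact hy (by rw [h0, zero_div])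
    have h1 := hνGH (fun x => F x / ρGH x) hcont hsupp
    have h2 : ∫ x, F x / ρGH x * ρGH x ∂μG = ∫ x, F x ∂μG :=
      integral_congr_ae (.of_forall fun x => div_mul_cancel₀ _ (hρGHpos x).ne')
    rw [← h2, h1]
  -- Step 3: disintegration of the inner `H` integral along `K`
  have hE3 : ∀ x : G, (∫ h : H, F (x * (h : G)) / ρGH (x * (h : G)) ∂μH)
      = ∫ p : H ⧸ K.subgroupOf H, ∫ k : K,
          F (x * ((p.out * ⟨(k : G), hKH k.2⟩ : H) : G)) /
            (ρGH (x * ((p.out * ⟨(k : G), hKH k.2⟩ : H) : G)) *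
              ρHK (p.out * ⟨(k : G), hKH k.2⟩)) ∂μK ∂νHK := by
    intro x
    have hcont : Continuous fun h : H => F (x * (h : G)) / (ρGH (x * (h : G)) * ρHK h) := by
      apply Continuous.div
      · exact hFcont.comp (continuous_const.mul continuous_subtype_val)
      · exact (hρGHcont.comp (continuous_const.mul continuous_subtype_val)).mul hρHKcont
      · exact fun h => (mul_pos (hρGHpos _) (hρHKpos _)).ne'
    have hsupp : HasCompactSupport fun h : H => F (x * (h : G)) / (ρGH (x * (h : G)) * ρHK h) := by
      apply HasCompactSupport.of_support_subset_isCompact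
        (hHclosed.isClosedEmbedding_subtypeVal.isCompact_preimage
          (hFc.image (continuous_mul_left x⁻¹)))
      intro h hh
      simp only [Function.mem_support] at hh
      have hF : F (x * (h : G)) ≠ 0 := fun h0 => hh (by rw [h0, zero_div])
      exact ⟨x * (h : G), subset_tsupport _ hF, by group⟩
    have h1 := hνHK _ hcont hsupp
    have h2 : ∫ h : H, F (x * (h : G)) / (ρGH (x * (h : G)) * ρHK h) * ρHK h ∂μH
        = ∫ h : H, F (x * (h : G)) / ρGH (x * (h : G)) ∂μH := by
      refine integral_congr_ae (.of_forall fun h => ?_)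
      have h4 : ρHK h ≠ 0 := (hρHKpos _).ne'
      show F (x * (h : G)) / (ρGH (x * (h : G)) * ρHK h) * ρHK h
          = F (x * (h : G)) / ρGH (x * (h : G))
      rw [div_mul_eq_div_div, div_mul_cancel₀ _ h4]
    rw [← h2, h1]
  -- Step 4: evaluation of the innermost `K` integral
  have hE4 : ∀ (x : G) (p : H ⧸ K.subgroupOf H),
      (∫ k : K, F (x * ((p.out * ⟨(k : G), hKH k.2⟩ : H) : G)) /
          (ρGH (x * ((p.out * ⟨(k : G), hKH k.2⟩ : H) : G)) *
            ρHK (p.out * ⟨(k : G), hKH k.2⟩)) ∂μK)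
        = f (QuotientGroup.mk (x * ((p.out : H) : G))) *
            (ρGK (x * ((p.out : H) : G)) /
              (ρGH (x * ((p.out : H) : G)) * ρHK p.out)) := by
    intro x p
    set z : G := x * ((p.out : H) : G) with hz_def
    have harg : ∀ k : K, x * ((p.out * ⟨(k : G), hKH k.2⟩ : H) : G) = z * (k : G) := by
      intro k
      rw [hz_def]
      push_cast
      rw [mul_assoc]
    have hpt : ∀ k : K,
        F (x * ((p.out * ⟨(k : G), hKH k.2⟩ : H) : G)) /
            (ρGH (x * ((p.out * ⟨(k : G), hKH k.2⟩ : H) : G)) *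
              ρHK (p.out * ⟨(k : G), hKH k.2⟩))
          = χ (z * (k : G)) *
              (f (QuotientGroup.mk z) * (ρGK z / (ρGH z * ρHK p.out)) * (a z)⁻¹) := by
      intro k
      have hmk : (QuotientGroup.mk (z * (k : G)) : G ⧸ K) = QuotientGroup.mk z :=
        QuotientGroup.mk_mul_of_mem z k.2
      have e3 := hρGK z k
      have e4 : ρGH (z * (k : G)) = ρGH z * ΔH ⟨(k : G), hKH k.2⟩ / ΔG (k : G) :=
        hρGH z ⟨(k : G), hKH k.2⟩
      have e5 := hρHK p.out k
      have n1 : ΔG (k : G) ≠ 0 := (hΔGpos _).ne'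
      have n2 : ΔH (⟨(k : G), hKH k.2⟩ : H) ≠ 0 := (hΔHpos _).ne'
      have n3 : ΔK k ≠ 0 := (hΔKpos _).ne'
      have n4 : ρGH z ≠ 0 := (hρGHpos _).ne'
      have n5 : ρHK p.out ≠ 0 := (hρHKpos _).ne'
      have n6 : ρGK z ≠ 0 := (hρGKpos _).ne'
      rw [harg k, hF_def]
      simp only [hmk, ha_inv z k, e3, e4, e5]
      rcases eq_or_ne (a z) 0 with h0 | h0
      · rw [hf0 z h0]; simp
      · field_simp
    calc (∫ k : K, F (x * ((p.out * ⟨(k : G), hKH k.2⟩ : H) : G)) /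
          (ρGH (x * ((p.out * ⟨(k : G), hKH k.2⟩ : H) : G)) *
            ρHK (p.out * ⟨(k : G), hKH k.2⟩)) ∂μK)
        = ∫ k : K, χ (z * (k : G)) *
            (f (QuotientGroup.mk z) * (ρGK z / (ρGH z * ρHK p.out)) * (a z)⁻¹) ∂μK :=
          integral_congr_ae (.of_forall hpt)
      _ = a z * (f (QuotientGroup.mk z) * (ρGK z / (ρGH z * ρHK p.out)) * (a z)⁻¹) :=
          integral_mul_const _ _
      _ = f (QuotientGroup.mk z) * (ρGK z / (ρGH z * ρHK p.out)) := by
          rcases eq_or_ne (a z) 0 with h0 | h0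
          · rw [hf0 z h0]; simp
          · rw [mul_comm (a z), mul_assoc, inv_mul_cancel₀ h0, mul_one]
  -- assemble everything
  calc ∫ q, f q ∂νGK = ∫ x, F x ∂μG := hE1.symm
    _ = ∫ q : G ⧸ H, ∫ h : H, F (q.out * (h : G)) / ρGH (q.out * (h : G)) ∂μH ∂νGH := hE2
    _ = ∫ x : G ⧸ H, ∫ y : H ⧸ K.subgroupOf H,
          f (QuotientGroup.mk (x.out * ((y.out : H) : G))) *
            (ρGK (x.out * ((y.out : H) : G)) /
              (ρGH (x.out * ((y.out : H) : G)) * ρHK y.out)) ∂νHK ∂νGH := by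
        refine integral_congr_ae (.of_forall fun q => ?_)
        show (∫ h : H, F (q.out * (h : G)) / ρGH (q.out * (h : G)) ∂μH) = _
        rw [hE3 q.out]
        refine integral_congr_ae (.of_forall fun p => ?_)
        show _ = f (QuotientGroup.mk (q.out * ((p.out : H) : G))) *
            (ρGK (q.out * ((p.out : H) : G)) /
              (ρGH (q.out * ((p.out : H) : G)) * ρHK p.out))
        exact hE4 q.out p
end

section
/- Let 𝔤 = sl(2,ℝ) and 𝔪 the subalgebra of traceless upper triangular matrices. Then for every W ∈ 𝔪, det(sinh(ad_𝔤 W / 2) / (ad_𝔤 W / 2)) = [det(sinh(ad_𝔪 W / 2) / (ad_𝔪 W / 2))]². -/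
private lemma sumaux (c r : ℝ) (g : ℕ → ℝ) (hg : ∀ n, |g n| ≤ c * r ^ n) :
    Summable fun n => ((Nat.factorial (2 * n + 1) : ℝ))⁻¹ * g n := by
  have hs : Summable (fun n : ℕ => c * (r ^ n / n.factorial)) :=
    (Real.summable_pow_div_factorial r).mul_left c
  refine hs.of_norm_bounded (fun n => ?_)
  have h1 : (0:ℝ) < n.factorial := by positivity
  have h2 : (n.factorial : ℝ) ≤ (Nat.factorial (2*n+1) : ℝ) := by
    exact_mod_cast Nat.factorial_le (by omega)
  rw [Real.norm_eq_abs, abs_mul, abs_inv,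
    abs_of_nonneg (by positivity : (0:ℝ) ≤ ((Nat.factorial (2*n+1):ℝ)))]
  calc ((Nat.factorial (2*n+1):ℝ))⁻¹ * |g n| ≤ ((n.factorial : ℝ))⁻¹ * (c * r ^ n) := by
        apply mul_le_mul _ (hg n) (abs_nonneg _) (by positivity)
        exact inv_anti₀ h1 h2
    _ = c * (r ^ n / n.factorial) := by ring

private lemma abnd (a : ℝ) {k n : ℕ} (h : k ≤ 2 * n) : |a| ^ k ≤ ((1 + a^2)^2) ^ n := by
  have h1 : |a| ≤ 1 + a^2 := by nlinarith [sq_nonneg (|a| - 1), sq_abs a]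
  calc |a| ^ k ≤ (1 + a^2) ^ k := pow_le_pow_left₀ (abs_nonneg a) h1 k
    _ ≤ (1 + a^2) ^ (2*n) := pow_le_pow_right₀ (by nlinarith [sq_nonneg a]) h
    _ = ((1 + a^2)^2) ^ n := by rw [← pow_mul]

private lemma pow2 (a b : ℝ) (n : ℕ) :
    (!![a, -b; 0, 0] : Matrix (Fin 2) (Fin 2) ℝ) ^ (2 * (n + 1)) =
      !![a ^ (2 * n + 2), -(a ^ (2 * n + 1) * b); 0, 0] := by
  induction n with
  | zero =>
    rw [show 2 * (0 + 1) = 2 by norm_num, pow_two, Matrix.mul_fin_two]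
    norm_num
    ring_nf
  | succ m ih =>
    rw [show 2 * (m + 1 + 1) = 2 * (m + 1) + 2 by ring, pow_add, ih,
      pow_two (!![a, -b; 0, 0] : Matrix (Fin 2) (Fin 2) ℝ),
      Matrix.mul_fin_two, Matrix.mul_fin_two]
    ext i j
    fin_cases i <;> fin_cases j <;> simp <;> ring

private lemma pow3 (a b : ℝ) (n : ℕ) :
    (!![a, -b, a; 0, 0, b; 0, 0, -a] : Matrix (Fin 3) (Fin 3) ℝ) ^ (2 * (n + 1)) =
      !![a ^ (2 * n + 2), -(a ^ (2 * n + 1) * b), -(a ^ (2 * n) * b ^ 2);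
         0, 0, -(a ^ (2 * n + 1) * b);
         0, 0, a ^ (2 * n + 2)] := by
  induction n with
  | zero =>
    rw [show 2 * (0 + 1) = 2 by norm_num, pow_two, Matrix.mul_fin_three]
    ext i j
    fin_cases i <;> fin_cases j <;> simp <;> ring
  | succ m ih =>
    rw [show 2 * (m + 1 + 1) = 2 * (m + 1) + 2 by ring, pow_add, ih,
      pow_two (!![a, -b, a; 0, 0, b; 0, 0, -a] : Matrix (Fin 3) (Fin 3) ℝ),
      Matrix.mul_fin_three, Matrix.mul_fin_three]
    ext i j
    fin_cases i <;> fin_cases j <;> simp <;> ring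

/-- `sinhcDet A = det(sinh(A)/A)`, defined through the everywhere-convergent power series
`sinh(A)/A = ∑ A^{2n}/(2n+1)!`. -/
noncomputable def sinhcDet {k : ℕ} (A : Matrix (Fin k) (Fin k) ℝ) : ℝ :=
  (∑' n : ℕ, ((Nat.factorial (2 * n + 1) : ℝ))⁻¹ • A ^ (2 * n)).det

/-- For `𝔤 = sl(2,ℝ)` and `𝔪` the subalgebra of traceless upper triangular
matrices, every `W ∈ 𝔪` is of the form `W = aH + b(X+Y)`; in the bases `{X+Y, H}` of `𝔪` and
`{X+Y, H, X}` of `𝔤` the operators `ad_𝔪 W` and `ad_𝔤 W` have matrices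
`[[2a, −2b],[0,0]]` and `[[2a, −2b, 2a],[0, 0, 2b],[0, 0, −2a]]`, and
`det(sinh(ad_𝔤 W/2)/(ad_𝔤 W/2)) = [det(sinh(ad_𝔪 W/2)/(ad_𝔪 W/2))]²`. -/
theorem statement17 (a b : ℝ)
    (Am : Matrix (Fin 2) (Fin 2) ℝ) (hAm : Am = !![2 * a, -2 * b; 0, 0])
    (Ag : Matrix (Fin 3) (Fin 3) ℝ)
    (hAg : Ag = !![2 * a, -2 * b, 2 * a; 0, 0, 2 * b; 0, 0, -2 * a]) :
    sinhcDet ((1 / 2 : ℝ) • Ag) = (sinhcDet ((1 / 2 : ℝ) • Am)) ^ 2 := by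
  subst hAm hAg
  have hm : (1/2 : ℝ) • (!![2 * a, -2 * b; 0, 0] : Matrix (Fin 2) (Fin 2) ℝ)
      = !![a, -b; 0, 0] := by
    ext i j
    fin_cases i <;> fin_cases j <;>
      simp [Matrix.vecHead, Matrix.vecTail] <;> ring
  have hg : (1/2 : ℝ) • (!![2 * a, -2 * b, 2 * a; 0, 0, 2 * b; 0, 0, -2 * a] :
      Matrix (Fin 3) (Fin 3) ℝ) = !![a, -b, a; 0, 0, b; 0, 0, -a] := by
    ext i j
    fin_cases i <;> fin_cases j <;>
      simp [Matrix.vecHead, Matrix.vecTail] <;> ring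
  rw [hm, hg]
  unfold sinhcDet
  -- summability of the 3×3 series
  have hsum3 : Summable (fun n : ℕ => ((Nat.factorial (2 * n + 1) : ℝ))⁻¹ •
      (!![a, -b, a; 0, 0, b; 0, 0, -a] : Matrix (Fin 3) (Fin 3) ℝ) ^ (2 * n)) := by
    refine Pi.summable.2 fun i => Pi.summable.2 fun j => ?_
    simp only [Matrix.smul_apply, smul_eq_mul]
    fin_cases i <;> fin_cases j
    · refine sumaux 1 ((1 + a^2)^2) _ (fun n => ?_)
      cases n with
      | zero => simp
      | succ m =>
        rw [pow3]
        show |a ^ (2*m+2)| ≤ 1 * ((1 + a^2)^2) ^ (m+1)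
        rw [one_mul, abs_pow]
        exact abnd a (by omega)
    · refine sumaux |b| ((1 + a^2)^2) _ (fun n => ?_)
      cases n with
      | zero => simp
      | succ m =>
        rw [pow3]
        show |(-(a ^ (2*m+1) * b))| ≤ |b| * ((1 + a^2)^2) ^ (m+1)
        rw [abs_neg, abs_mul, abs_pow]
        calc |a| ^ (2*m+1) * |b| ≤ ((1 + a^2)^2) ^ (m+1) * |b| :=
              mul_le_mul_of_nonneg_right (abnd a (by omega)) (abs_nonneg b)
          _ = |b| * ((1 + a^2)^2) ^ (m+1) := mul_comm _ _
    · refine sumaux (b^2) ((1 + a^2)^2) _ (fun n => ?_)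
      cases n with
      | zero =>
        show |(0:ℝ)| ≤ b^2 * ((1 + a^2)^2) ^ 0
        rw [abs_zero, pow_zero, mul_one]
        positivity
      | succ m =>
        rw [pow3]
        show |(-(a ^ (2*m) * b^2))| ≤ b^2 * ((1 + a^2)^2) ^ (m+1)
        rw [abs_neg, abs_mul, abs_pow, abs_pow, sq_abs]
        calc |a| ^ (2*m) * b^2 ≤ ((1 + a^2)^2) ^ (m+1) * b^2 :=
              mul_le_mul_of_nonneg_right (abnd a (by omega)) (sq_nonneg b)
          _ = b^2 * ((1 + a^2)^2) ^ (m+1) := mul_comm _ _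
    · refine sumaux 1 ((1 + a^2)^2) _ (fun n => ?_)
      cases n with
      | zero => simp
      | succ m =>
        rw [pow3]
        show |(0:ℝ)| ≤ 1 * ((1 + a^2)^2) ^ (m+1)
        rw [abs_zero, one_mul]; positivity
    · refine sumaux 1 ((1 + a^2)^2) _ (fun n => ?_)
      cases n with
      | zero => simp
      | succ m =>
        rw [pow3]
        show |(0:ℝ)| ≤ 1 * ((1 + a^2)^2) ^ (m+1)
        rw [abs_zero, one_mul]; positivity
    · refine sumaux |b| ((1 + a^2)^2) _ (fun n => ?_)
      cases n with
      | zero => simp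
      | succ m =>
        rw [pow3]
        show |(-(a ^ (2*m+1) * b))| ≤ |b| * ((1 + a^2)^2) ^ (m+1)
        rw [abs_neg, abs_mul, abs_pow]
        calc |a| ^ (2*m+1) * |b| ≤ ((1 + a^2)^2) ^ (m+1) * |b| :=
              mul_le_mul_of_nonneg_right (abnd a (by omega)) (abs_nonneg b)
          _ = |b| * ((1 + a^2)^2) ^ (m+1) := mul_comm _ _
    · refine sumaux 1 ((1 + a^2)^2) _ (fun n => ?_)
      cases n with
      | zero => simp
      | succ m =>
        rw [pow3]
        show |(0:ℝ)| ≤ 1 * ((1 + a^2)^2) ^ (m+1)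
        rw [abs_zero, one_mul]; positivity
    · refine sumaux 1 ((1 + a^2)^2) _ (fun n => ?_)
      cases n with
      | zero => simp
      | succ m =>
        rw [pow3]
        show |(0:ℝ)| ≤ 1 * ((1 + a^2)^2) ^ (m+1)
        rw [abs_zero, one_mul]; positivity
    · refine sumaux 1 ((1 + a^2)^2) _ (fun n => ?_)
      cases n with
      | zero => simp
      | succ m =>
        rw [pow3]
        show |a ^ (2*m+2)| ≤ 1 * ((1 + a^2)^2) ^ (m+1)
        rw [one_mul, abs_pow]
        exact abnd a (by omega)
  -- summability of the 2×2 series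
  have hsum2 : Summable (fun n : ℕ => ((Nat.factorial (2 * n + 1) : ℝ))⁻¹ •
      (!![a, -b; 0, 0] : Matrix (Fin 2) (Fin 2) ℝ) ^ (2 * n)) := by
    refine Pi.summable.2 fun i => Pi.summable.2 fun j => ?_
    simp only [Matrix.smul_apply, smul_eq_mul]
    fin_cases i <;> fin_cases j
    · refine sumaux 1 ((1 + a^2)^2) _ (fun n => ?_)
      cases n with
      | zero => simp
      | succ m =>
        rw [pow2]
        show |a ^ (2*m+2)| ≤ 1 * ((1 + a^2)^2) ^ (m+1)
        rw [one_mul, abs_pow]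
        exact abnd a (by omega)
    · refine sumaux |b| ((1 + a^2)^2) _ (fun n => ?_)
      cases n with
      | zero => simp
      | succ m =>
        rw [pow2]
        show |(-(a ^ (2*m+1) * b))| ≤ |b| * ((1 + a^2)^2) ^ (m+1)
        rw [abs_neg, abs_mul, abs_pow]
        calc |a| ^ (2*m+1) * |b| ≤ ((1 + a^2)^2) ^ (m+1) * |b| :=
              mul_le_mul_of_nonneg_right (abnd a (by omega)) (abs_nonneg b)
          _ = |b| * ((1 + a^2)^2) ^ (m+1) := mul_comm _ _
    · refine sumaux 1 ((1 + a^2)^2) _ (fun n => ?_)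
      cases n with
      | zero => simp
      | succ m =>
        rw [pow2]
        show |(0:ℝ)| ≤ 1 * ((1 + a^2)^2) ^ (m+1)
        rw [abs_zero, one_mul]; positivity
    · refine sumaux 1 ((1 + a^2)^2) _ (fun n => ?_)
      cases n with
      | zero => simp
      | succ m =>
        rw [pow2]
        show |(0:ℝ)| ≤ 1 * ((1 + a^2)^2) ^ (m+1)
        rw [abs_zero, one_mul]; positivity
  -- entrywise tsum
  have t3 : ∀ i j : Fin 3, (∑' n : ℕ, ((Nat.factorial (2 * n + 1) : ℝ))⁻¹ •
      (!![a, -b, a; 0, 0, b; 0, 0, -a] : Matrix (Fin 3) (Fin 3) ℝ) ^ (2 * n)) i j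
      = ∑' n : ℕ, ((Nat.factorial (2 * n + 1) : ℝ))⁻¹ *
        ((!![a, -b, a; 0, 0, b; 0, 0, -a] : Matrix (Fin 3) (Fin 3) ℝ) ^ (2 * n)) i j := by
    intro i j
    erw [tsum_apply hsum3, tsum_apply (Pi.summable.1 hsum3 i)]
    simp [Matrix.smul_apply]
  have t2 : ∀ i j : Fin 2, (∑' n : ℕ, ((Nat.factorial (2 * n + 1) : ℝ))⁻¹ •
      (!![a, -b; 0, 0] : Matrix (Fin 2) (Fin 2) ℝ) ^ (2 * n)) i j
      = ∑' n : ℕ, ((Nat.factorial (2 * n + 1) : ℝ))⁻¹ *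
        ((!![a, -b; 0, 0] : Matrix (Fin 2) (Fin 2) ℝ) ^ (2 * n)) i j := by
    intro i j
    erw [tsum_apply hsum2, tsum_apply (Pi.summable.1 hsum2 i)]
    simp [Matrix.smul_apply]
  -- values of specific entry sums
  have hv300 : (∑' n : ℕ, ((Nat.factorial (2 * n + 1) : ℝ))⁻¹ *
      ((!![a, -b, a; 0, 0, b; 0, 0, -a] : Matrix (Fin 3) (Fin 3) ℝ) ^ (2 * n)) 0 0)
      = ∑' n : ℕ, ((Nat.factorial (2 * n + 1) : ℝ))⁻¹ * a ^ (2 * n) := by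
    refine tsum_congr fun n => ?_
    cases n with
    | zero => norm_num
    | succ m =>
      have h : ((!![a, -b, a; 0, 0, b; 0, 0, -a] : Matrix (Fin 3) (Fin 3) ℝ) ^ (2 * (m+1))) 0 0
          = a ^ (2 * (m+1)) := by
        rw [pow3]
        show a ^ (2*m+2) = a ^ (2*(m+1))
        ring
      rw [h]
  have hv322 : (∑' n : ℕ, ((Nat.factorial (2 * n + 1) : ℝ))⁻¹ *
      ((!![a, -b, a; 0, 0, b; 0, 0, -a] : Matrix (Fin 3) (Fin 3) ℝ) ^ (2 * n)) 2 2)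
      = ∑' n : ℕ, ((Nat.factorial (2 * n + 1) : ℝ))⁻¹ * a ^ (2 * n) := by
    refine tsum_congr fun n => ?_
    cases n with
    | zero => norm_num
    | succ m =>
      have h : ((!![a, -b, a; 0, 0, b; 0, 0, -a] : Matrix (Fin 3) (Fin 3) ℝ) ^ (2 * (m+1))) 2 2
          = a ^ (2 * (m+1)) := by
        rw [pow3]
        show a ^ (2*m+2) = a ^ (2*(m+1))
        ring
      rw [h]
  have hv311 : (∑' n : ℕ, ((Nat.factorial (2 * n + 1) : ℝ))⁻¹ *
      ((!![a, -b, a; 0, 0, b; 0, 0, -a] : Matrix (Fin 3) (Fin 3) ℝ) ^ (2 * n)) 1 1) = 1 := by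
    rw [tsum_eq_single 0 (fun n hn => ?_)]
    · norm_num
    · match n, hn with
      | m + 1, _ =>
        have h : ((!![a, -b, a; 0, 0, b; 0, 0, -a] : Matrix (Fin 3) (Fin 3) ℝ) ^ (2 * (m+1))) 1 1
            = 0 := by rw [pow3]; rfl
        rw [h, mul_zero]
  have hv310 : (∑' n : ℕ, ((Nat.factorial (2 * n + 1) : ℝ))⁻¹ *
      ((!![a, -b, a; 0, 0, b; 0, 0, -a] : Matrix (Fin 3) (Fin 3) ℝ) ^ (2 * n)) 1 0) = 0 := by
    have hterm : ∀ n : ℕ, ((Nat.factorial (2 * n + 1) : ℝ))⁻¹ *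
        ((!![a, -b, a; 0, 0, b; 0, 0, -a] : Matrix (Fin 3) (Fin 3) ℝ) ^ (2 * n)) 1 0 = 0 := by
      intro n
      cases n with
      | zero => norm_num [Matrix.one_apply]
      | succ m =>
        have h : ((!![a, -b, a; 0, 0, b; 0, 0, -a] : Matrix (Fin 3) (Fin 3) ℝ) ^ (2 * (m+1))) 1 0
            = 0 := by rw [pow3]; rfl
        rw [h, mul_zero]
    rw [tsum_congr hterm, tsum_zero]
  have hv320 : (∑' n : ℕ, ((Nat.factorial (2 * n + 1) : ℝ))⁻¹ *
      ((!![a, -b, a; 0, 0, b; 0, 0, -a] : Matrix (Fin 3) (Fin 3) ℝ) ^ (2 * n)) 2 0) = 0 := by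
    have hterm : ∀ n : ℕ, ((Nat.factorial (2 * n + 1) : ℝ))⁻¹ *
        ((!![a, -b, a; 0, 0, b; 0, 0, -a] : Matrix (Fin 3) (Fin 3) ℝ) ^ (2 * n)) 2 0 = 0 := by
      intro n
      cases n with
      | zero => norm_num [Matrix.one_apply]; decide
      | succ m =>
        have h : ((!![a, -b, a; 0, 0, b; 0, 0, -a] : Matrix (Fin 3) (Fin 3) ℝ) ^ (2 * (m+1))) 2 0
            = 0 := by rw [pow3]; rfl
        rw [h, mul_zero]
    rw [tsum_congr hterm, tsum_zero]
  have hv321 : (∑' n : ℕ, ((Nat.factorial (2 * n + 1) : ℝ))⁻¹ *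
      ((!![a, -b, a; 0, 0, b; 0, 0, -a] : Matrix (Fin 3) (Fin 3) ℝ) ^ (2 * n)) 2 1) = 0 := by
    have hterm : ∀ n : ℕ, ((Nat.factorial (2 * n + 1) : ℝ))⁻¹ *
        ((!![a, -b, a; 0, 0, b; 0, 0, -a] : Matrix (Fin 3) (Fin 3) ℝ) ^ (2 * n)) 2 1 = 0 := by
      intro n
      cases n with
      | zero => norm_num [Matrix.one_apply]; decide
      | succ m =>
        have h : ((!![a, -b, a; 0, 0, b; 0, 0, -a] : Matrix (Fin 3) (Fin 3) ℝ) ^ (2 * (m+1))) 2 1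
            = 0 := by rw [pow3]; rfl
        rw [h, mul_zero]
    rw [tsum_congr hterm, tsum_zero]
  have hv200 : (∑' n : ℕ, ((Nat.factorial (2 * n + 1) : ℝ))⁻¹ *
      ((!![a, -b; 0, 0] : Matrix (Fin 2) (Fin 2) ℝ) ^ (2 * n)) 0 0)
      = ∑' n : ℕ, ((Nat.factorial (2 * n + 1) : ℝ))⁻¹ * a ^ (2 * n) := by
    refine tsum_congr fun n => ?_
    cases n with
    | zero => norm_num
    | succ m =>
      have h : ((!![a, -b; 0, 0] : Matrix (Fin 2) (Fin 2) ℝ) ^ (2 * (m+1))) 0 0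
          = a ^ (2 * (m+1)) := by
        rw [pow2]
        show a ^ (2*m+2) = a ^ (2*(m+1))
        ring
      rw [h]
  have hv211 : (∑' n : ℕ, ((Nat.factorial (2 * n + 1) : ℝ))⁻¹ *
      ((!![a, -b; 0, 0] : Matrix (Fin 2) (Fin 2) ℝ) ^ (2 * n)) 1 1) = 1 := by
    rw [tsum_eq_single 0 (fun n hn => ?_)]
    · norm_num
    · match n, hn with
      | m + 1, _ =>
        have h : ((!![a, -b; 0, 0] : Matrix (Fin 2) (Fin 2) ℝ) ^ (2 * (m+1))) 1 1
            = 0 := by rw [pow2]; rfl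
        rw [h, mul_zero]
  have hv210 : (∑' n : ℕ, ((Nat.factorial (2 * n + 1) : ℝ))⁻¹ *
      ((!![a, -b; 0, 0] : Matrix (Fin 2) (Fin 2) ℝ) ^ (2 * n)) 1 0) = 0 := by
    have hterm : ∀ n : ℕ, ((Nat.factorial (2 * n + 1) : ℝ))⁻¹ *
        ((!![a, -b; 0, 0] : Matrix (Fin 2) (Fin 2) ℝ) ^ (2 * n)) 1 0 = 0 := by
      intro n
      cases n with
      | zero => norm_num [Matrix.one_apply]
      | succ m =>
        have h : ((!![a, -b; 0, 0] : Matrix (Fin 2) (Fin 2) ℝ) ^ (2 * (m+1))) 1 0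
            = 0 := by rw [pow2]; rfl
        rw [h, mul_zero]
    rw [tsum_congr hterm, tsum_zero]
  rw [Matrix.det_fin_three, Matrix.det_fin_two]
  simp only [t3, t2]
  rw [hv300, hv322, hv311, hv310, hv320, hv321, hv200, hv211, hv210]
  ring
end
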